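/- arXiv:2510.22007 — 4 statements merged into one kernel-verified Lean document; each statement's English description precedes it below -/
import Mathlib

section
/- Let X be uniform on [0,1] and, conditionally on X = x, let U be uniform on [Δx, 1 - Δ + Δx] for a fixed Δ ∈ (0,1). Then Y = |U - X| has probability density f(y) = (2/(1-Δ)) - 2y/(1-Δ)² for 0 < y < 1-Δ, and f(y) = 0 for y ≥ 1-Δ. -/
open MeasureTheory ProbabilityTheory Set
open scoped ENNReal

private lemma lint_if_mem (s : Set ℝ) (hs : MeasurableSet s) (r : ℝ) :
    ∫⁻ u, s.indicator (fun _ => ENNReal.ofReal r) u = ENNReal.ofReal r * volume s := by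
  rw [lintegral_indicator hs, setLIntegral_const]

private lemma lint_Ioc_ofReal {f : ℝ → ℝ} (hf : Continuous f) {a b : ℝ} (hab : a ≤ b)
    (hpos : ∀ x ∈ Ioc a b, 0 ≤ f x) :
    ∫⁻ x in Ioc a b, ENNReal.ofReal (f x) = ENNReal.ofReal (∫ x in a..b, f x) := by
  rw [intervalIntegral.integral_of_le hab,
    ofReal_integral_eq_lintegral_ofReal ((hf.integrableOn_Icc).mono_set Ioc_subset_Icc_self)
      (by filter_upwards [ae_restrict_mem measurableSet_Ioc] with x hx using hpos x hx)]

private lemma integral_min' {c t : ℝ} (hc : 0 < c) (ht : 0 ≤ t) :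
    ∫ x in (0:ℝ)..1, min (c*x) t = min t c - (min t c)^2/(2*c) := by
  set s := min t c with hs
  have hs0 : 0 ≤ s := le_min ht hc.le
  have hsc : s ≤ c := min_le_right _ _
  have hst : s ≤ t := min_le_left _ _
  have hx1 : s/c ≤ 1 := by rw [div_le_one hc]; exact hsc
  have hx0 : 0 ≤ s/c := div_nonneg hs0 hc.le
  have cont : Continuous fun x : ℝ => min (c*x) t :=
    (continuous_const.mul continuous_id').min continuous_const
  rw [← intervalIntegral.integral_add_adjacent_intervals
      (cont.intervalIntegrable 0 (s/c)) (cont.intervalIntegrable (s/c) 1)]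
  have hmul : c * (s/c) = s := by field_simp
  have h1 : ∫ x in (0:ℝ)..(s/c), min (c*x) t = ∫ x in (0:ℝ)..(s/c), c*x := by
    apply intervalIntegral.integral_congr
    intro x hx
    rw [uIcc_of_le hx0] at hx
    have hcx : c*x ≤ s := hmul ▸ mul_le_mul_of_nonneg_left hx.2 hc.le
    exact min_eq_left (le_trans hcx hst)
  have h2 : ∫ x in (s/c)..1, min (c*x) t = ∫ x in (s/c)..1, s := by
    apply intervalIntegral.integral_congr
    intro x hx
    rw [uIcc_of_le hx1] at hx
    have hcx : s ≤ c*x := hmul ▸ mul_le_mul_of_nonneg_left hx.1 hc.le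
    have hcx1 : c*x ≤ c := by nlinarith [hx.2]
    rcases le_total t (c*x) with h | h
    · show min (c*x) t = s
      have hts : t ≤ s := le_min le_rfl (le_trans h hcx1)
      rw [min_eq_right h]; exact le_antisymm hts hst
    · show min (c*x) t = s
      rw [min_eq_left h]; exact le_antisymm (le_min h hcx1) hcx
  rw [h1, h2, intervalIntegral.integral_const, intervalIntegral.integral_const_mul, integral_id]
  field_simp
  linear_combination (2*s*c - 2*s^2) * (mul_inv_cancel₀ hc.ne' : c * c⁻¹ = 1)

private lemma integral_dens (c s : ℝ) :
    ∫ y in (0:ℝ)..s, (2/c - 2*y/c^2) = 2*s/c - s^2/c^2 := by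
  have h : ∀ y : ℝ, 2/c - 2*y/c^2 = 2/c - (2/c^2)*y := fun y => by ring
  simp_rw [h]
  rw [intervalIntegral.integral_sub intervalIntegrable_const
      ((show IntervalIntegrable (fun y : ℝ => 2/c^2 * y) volume 0 s from
        (continuous_const.mul continuous_id').intervalIntegrable _ _)),
    intervalIntegral.integral_const, intervalIntegral.integral_const_mul, integral_id]
  simp only [smul_eq_mul]
  ring

private lemma rhs_calc {c t : ℝ} (hc : 0 < c) (ht : 0 ≤ t) :
    ∫⁻ y in Iic t, ENNReal.ofReal (if 0 < y ∧ y < c then 2/c - 2*y/c^2 else 0)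
      = ENNReal.ofReal (2*(min t c)/c - (min t c)^2/c^2) := by
  set s := min t c with hs
  have hs0 : 0 ≤ s := le_min ht hc.le
  have hsc : s ≤ c := min_le_right _ _
  have key : ∀ y, ENNReal.ofReal (if 0 < y ∧ y < c then 2/c - 2*y/c^2 else 0)
      = (Ioo (0:ℝ) c).indicator (fun y => ENNReal.ofReal (2/c - 2*y/c^2)) y := by
    intro y; by_cases h : 0 < y ∧ y < c
    · simp [indicator, mem_Ioo, h]
    · simp only [indicator, mem_Ioo, h, if_false]; simp [h]
  simp_rw [key]
  rw [setLIntegral_indicator measurableSet_Ioo]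
  have hae : ((Ioo (0:ℝ) c ∩ Iic t : Set ℝ) : Set ℝ) =ᵐ[(volume : Measure ℝ)] (Ioc (0:ℝ) s : Set ℝ) := by
    rcases le_or_gt c t with h | h
    · have h1 : Ioo (0:ℝ) c ∩ Iic t = Ioo 0 c :=
        inter_eq_left.mpr fun y hy => le_trans hy.2.le h
      have h2 : s = c := min_eq_right h
      rw [h1, h2]; exact Ioo_ae_eq_Ioc
    · have h1 : Ioo (0:ℝ) c ∩ Iic t = Ioc 0 t := by
        ext y
        simp only [mem_inter_iff, mem_Ioo, mem_Iic, mem_Ioc]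
        exact ⟨fun ⟨⟨a, _⟩, b⟩ => ⟨a, b⟩, fun ⟨a, b⟩ => ⟨⟨a, lt_of_le_of_lt b h⟩, b⟩⟩
      have h2 : s = t := min_eq_left h.le
      rw [h1, h2]
      exact Filter.EventuallyEq.rfl
  rw [setLIntegral_congr hae,
    lint_Ioc_ofReal (by continuity) hs0 (fun y hy => ?_), integral_dens]
  have hyc : y ≤ c := le_trans hy.2 hsc
  have he : 2/c - 2*y/c^2 = (2*c - 2*y)/c^2 := by field_simp
  rw [he]
  exact div_nonneg (by linarith) (sq_nonneg c)

/-- Let `X` be uniform on `[0,1]` and, conditionally on `X = x`, let `U` be uniform on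
`[Δx, 1-Δ+Δx]` for a fixed `Δ ∈ (0,1)` (so the joint density of `(X,U)` is
`(1-Δ)⁻¹` on `{(x,u) : x ∈ [0,1], Δx ≤ u ≤ 1-Δ+Δx}`).  Then `Y = |U - X|` has density
`f(y) = 2/(1-Δ) - 2y/(1-Δ)²` for `0 < y < 1-Δ` and `f(y) = 0` otherwise. -/
theorem stmt1
    {Ω : Type*} [MeasureSpace Ω] [IsProbabilityMeasure (ℙ : Measure Ω)]
    (Δ : ℝ) (hΔ : Δ ∈ Ioo (0:ℝ) 1)
    (X U : Ω → ℝ) (hX : Measurable X) (hU : Measurable U)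
    (hjoint : Measure.map (fun ω => (X ω, U ω)) ℙ
      = (volume : Measure (ℝ × ℝ)).withDensity
          (fun p => ENNReal.ofReal
            (if p.1 ∈ Icc (0:ℝ) 1 ∧ p.2 ∈ Icc (Δ * p.1) (1 - Δ + Δ * p.1)
              then (1 - Δ)⁻¹ else 0))) :
    Measure.map (fun ω => |U ω - X ω|) ℙ
      = volume.withDensity
          (fun y => ENNReal.ofReal
            (if 0 < y ∧ y < 1 - Δ then 2 / (1 - Δ) - 2 * y / (1 - Δ)^2 else 0)) := by
  obtain ⟨hΔ0, hΔ1⟩ := hΔ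
  have hc : (0:ℝ) < 1 - Δ := by linarith
  set c : ℝ := 1 - Δ with hcdef
  set g : ℝ × ℝ → ℝ := fun p => |p.2 - p.1| with hg
  have hgm : Measurable g := (measurable_snd.sub measurable_fst).abs
  set f₂ : ℝ × ℝ → ℝ≥0∞ := fun p => ENNReal.ofReal
      (if p.1 ∈ Icc (0:ℝ) 1 ∧ p.2 ∈ Icc (Δ * p.1) (1 - Δ + Δ * p.1)
        then (1 - Δ)⁻¹ else 0) with hf₂
  have key : Measure.map (fun ω => |U ω - X ω|) ℙ
      = Measure.map g (volume.withDensity f₂) := by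
    rw [← hjoint, Measure.map_map hgm (hX.prodMk hU)]
    rfl
  rw [key]
  haveI : IsProbabilityMeasure (Measure.map g (volume.withDensity f₂)) := by
    rw [← key]
    exact Measure.isProbabilityMeasure_map ((hU.sub hX).abs.aemeasurable)
  apply Measure.ext_of_Iic
  intro t
  -- RHS as a set lintegral
  rw [withDensity_apply _ measurableSet_Iic]
  rcases lt_or_ge t 0 with htneg | ht
  · -- t < 0 : both sides vanish
    have hpre : g ⁻¹' Iic t = ∅ := by
      ext p
      simp only [mem_preimage, mem_Iic, mem_empty_iff_false, iff_false, not_le, hg]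
      exact lt_of_lt_of_le htneg (abs_nonneg _)
    rw [Measure.map_apply hgm measurableSet_Iic, hpre, measure_empty]
    have hzero : (∫⁻ y in Iic t, ENNReal.ofReal
        (if 0 < y ∧ y < 1 - Δ then 2 / (1 - Δ) - 2 * y / (1 - Δ)^2 else 0)) = 0 := by
      have hz : ∀ y ∈ Iic t, ENNReal.ofReal
          (if 0 < y ∧ y < 1 - Δ then 2 / (1 - Δ) - 2 * y / (1 - Δ)^2 else 0) = 0 := by
        intro y hy
        have hny : ¬ (0 < y ∧ y < 1 - Δ) :=
          fun h => absurd (lt_of_lt_of_le h.1 hy) (not_lt.mpr htneg.le)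
        simp [hny]
      rw [setLIntegral_congr_fun measurableSet_Iic hz]
      simp
    exact hzero.symm
  · -- t ≥ 0
    set s : ℝ := min t c with hsdef
    have hs0 : 0 ≤ s := le_min ht hc.le
    have hsc : s ≤ c := min_le_right _ _
    -- RHS value
    have hRHS : ∫⁻ y in Iic t,
        ENNReal.ofReal (if 0 < y ∧ y < 1 - Δ then 2 / (1 - Δ) - 2 * y / (1 - Δ)^2 else 0)
        = ENNReal.ofReal (2*s/c - s^2/c^2) := by
      have := rhs_calc (c := c) (t := t) hc ht
      simpa [hcdef, div_eq_mul_inv] using this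
    rw [hRHS]
    -- LHS
    set S : Set (ℝ × ℝ) := {p : ℝ × ℝ | (p.1 ∈ Icc (0:ℝ) 1
        ∧ p.2 ∈ Icc (Δ * p.1) (1 - Δ + Δ * p.1)) ∧ |p.2 - p.1| ≤ t} with hSdef
    have hSm : MeasurableSet S := by
      apply MeasurableSet.inter
      · apply MeasurableSet.inter
        · exact measurable_fst measurableSet_Icc
        · exact MeasurableSet.inter
            (measurableSet_le (measurable_const.mul measurable_fst) measurable_snd)
            (measurableSet_le measurable_snd
              (measurable_const.add (measurable_const.mul measurable_fst)))
      · exact measurableSet_le (measurable_snd.sub measurable_fst).abs measurable_const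
    set H : ℝ × ℝ → ℝ≥0∞ := fun p => ENNReal.ofReal (if p ∈ S then (1-Δ)⁻¹ else 0) with hH
    have hHind : H = S.indicator (fun _ => ENNReal.ofReal ((1-Δ)⁻¹)) := by
      funext p; by_cases hp : p ∈ S <;> simp [hH, hp]
    have hHm : Measurable H := by
      rw [hHind]; exact measurable_const.indicator hSm
    have hLHSset : (g ⁻¹' Iic t).indicator f₂ = H := by
      funext p
      by_cases hp1 : |p.2 - p.1| ≤ t
      · rw [indicator_of_mem (show p ∈ g ⁻¹' Iic t from hp1)]
        show ENNReal.ofReal (if p.1 ∈ Icc (0:ℝ) 1 ∧ p.2 ∈ Icc (Δ * p.1) (1 - Δ + Δ * p.1)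
            then (1 - Δ)⁻¹ else 0) = ENNReal.ofReal (if p ∈ S then (1 - Δ)⁻¹ else 0)
        by_cases hp2 : p.1 ∈ Icc (0:ℝ) 1 ∧ p.2 ∈ Icc (Δ * p.1) (1 - Δ + Δ * p.1)
        · rw [if_pos hp2, if_pos (show p ∈ S from ⟨hp2, hp1⟩)]
        · rw [if_neg hp2, if_neg (show p ∉ S from fun h => hp2 h.1)]
      · rw [indicator_of_notMem (show p ∉ g ⁻¹' Iic t from hp1)]
        show (0:ℝ≥0∞) = ENNReal.ofReal (if p ∈ S then (1 - Δ)⁻¹ else 0)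
        rw [if_neg (show p ∉ S from fun h => hp1 h.2), ENNReal.ofReal_zero]
    rw [Measure.map_apply hgm measurableSet_Iic,
      withDensity_apply _ (hgm measurableSet_Iic),
      ← lintegral_indicator (hgm measurableSet_Iic), hLHSset,
      Measure.volume_eq_prod, lintegral_prod _ hHm.aemeasurable]
    -- inner integral
    have hinner : ∀ x : ℝ, (∫⁻ u, H (x, u))
        = (Icc (0:ℝ) 1).indicator
            (fun x => ENNReal.ofReal c⁻¹
              * ENNReal.ofReal (min (1 - Δ + Δ*x) (x+t) - max (Δ*x) (x-t))) x := by
      intro x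
      by_cases hx : x ∈ Icc (0:ℝ) 1
      · have hcond : ∀ u : ℝ, ((x, u) ∈ S)
            ↔ u ∈ Icc (max (Δ*x) (x-t)) (min (1 - Δ + Δ*x) (x+t)) := by
          intro u
          rw [← Icc_inter_Icc, mem_inter_iff]
          constructor
          · rintro ⟨⟨_, hu⟩, habs⟩
            rw [abs_le] at habs
            exact ⟨hu, by constructor <;> linarith [habs.1, habs.2]⟩
          · rintro ⟨hu, hu2⟩
            refine ⟨⟨hx, hu⟩, ?_⟩
            rw [abs_le]
            obtain ⟨a, b⟩ := hu2
            constructor <;> linarith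
        have : (fun u => H (x, u)) = (Icc (max (Δ*x) (x-t)) (min (1 - Δ + Δ*x) (x+t))).indicator
            (fun _ => ENNReal.ofReal ((1-Δ)⁻¹)) := by
          funext u
          by_cases hu : u ∈ Icc (max (Δ*x) (x-t)) (min (1 - Δ + Δ*x) (x+t))
          · rw [indicator_of_mem hu, hH]
            simp only [(hcond u).mpr hu, if_true]
          · rw [indicator_of_notMem hu, hH]
            show ENNReal.ofReal (if (x, u) ∈ S then (1 - Δ)⁻¹ else 0) = 0
            rw [if_neg (fun h => hu ((hcond u).mp h)), ENNReal.ofReal_zero]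
        rw [this, lint_if_mem _ measurableSet_Icc, Real.volume_Icc,
          indicator_of_mem hx]
      · have : (fun u => H (x, u)) = fun _ => 0 := by
          funext u
          have hpS : (x, u) ∉ S := fun h => hx h.1.1
          simp [hH, hpS]
        rw [this, lintegral_zero, indicator_of_notMem hx]
    have hcontL : Continuous fun x : ℝ => min (1 - Δ + Δ*x) (x+t) - max (Δ*x) (x-t) :=
      (((continuous_const.add (continuous_const.mul continuous_id')).min
        (continuous_id'.add continuous_const)).sub
      ((continuous_const.mul continuous_id').max (continuous_id'.sub continuous_const)))
    rw [lintegral_congr hinner, lintegral_indicator measurableSet_Icc,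
      lintegral_const_mul _ hcontL.measurable.ennreal_ofReal,
      setLIntegral_congr (Ioc_ae_eq_Icc (μ := volume) (a := (0:ℝ)) (b := 1)).symm,
      lint_Ioc_ofReal hcontL zero_le_one (fun x hx => ?_)]
    · -- compute the real integral
      have hLrw : ∀ x : ℝ, min (1 - Δ + Δ*x) (x+t) - max (Δ*x) (x-t)
          = min (c*(1-x)) t + min (c*x) t := by
        intro x
        have e1 : min (1 - Δ + Δ*x) (x+t) = x + min (c*(1-x)) t := by
          have h' : 1 - Δ + Δ*x = x + c*(1-x) := by rw [hcdef]; ring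
          rw [h']
          rcases le_total (c*(1-x)) t with h | h
          · rw [min_eq_left (by linarith), min_eq_left h]
          · rw [min_eq_right (by linarith), min_eq_right h]
        have e2 : max (Δ*x) (x-t) = x - min (c*x) t := by
          have h' : Δ*x = x - c*x := by rw [hcdef]; ring
          rw [h']
          rcases le_total (c*x) t with h | h
          · rw [max_eq_left (by linarith), min_eq_left h]
          · rw [max_eq_right (by linarith), min_eq_right h]
        rw [e1, e2]; ring
      have hint : ∫ x in (0:ℝ)..1, (min (1 - Δ + Δ*x) (x+t) - max (Δ*x) (x-t))
          = 2*(s - s^2/(2*c)) := by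
        simp_rw [hLrw]
        rw [intervalIntegral.integral_add
            (show IntervalIntegrable (fun x : ℝ => min (c*(1-x)) t) volume 0 1 from
              ((continuous_const.mul (continuous_const.sub continuous_id')).min
              continuous_const).intervalIntegrable _ _)
            (show IntervalIntegrable (fun x : ℝ => min (c*x) t) volume 0 1 from
              ((continuous_const.mul continuous_id').min continuous_const).intervalIntegrable _ _)]
        have hcomp : ∫ x in (0:ℝ)..1, min (c*(1-x)) t = ∫ x in (0:ℝ)..1, min (c*x) t := by
          have := intervalIntegral.integral_comp_sub_left
            (a := (0:ℝ)) (b := 1) (fun y => min (c*y) t) 1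
          simpa using this
        rw [hcomp, integral_min' hc ht, ← hsdef]
        ring
      rw [hint, ← ENNReal.ofReal_mul (by positivity)]
      congr 1
      rw [hcdef] at *
      field_simp
    · -- nonnegativity of integrand on Ioc 0 1
      obtain ⟨hx0, hx1⟩ := hx
      have h1 : Δ*x ≤ x := by nlinarith
      have h2 : x - t ≤ x := by linarith
      have h3 : x ≤ 1 - Δ + Δ*x := by nlinarith
      have h4 : x ≤ x + t := by linarith
      have := max_le h1 h2
      have := le_min h3 h4
      linarith
end

section
/- For m ≥ 2 and 1/2 < Δ < 1, the integral I_m(Δ) = ∫_{[0,1]^m} max(1 - Δ - Δ·(max_i x_i - min_i x_i), 0) dx equals ((1-Δ)/Δ)^m · (1 - 2m(1-Δ)/(m+1)). -/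
open MeasureTheory Set

lemma stmt7_integral_len (r0 : ℝ) (h0 : 0 < r0) (h1 : r0 < 1) (m : ℕ) (hm : 1 ≤ m) :
    ∫ s : ℝ, (max (min 1 (s + r0) - max 0 s) 0) ^ m
      = 2 * (r0 ^ (m + 1) / (m + 1)) + (1 - r0) * r0 ^ m := by
  set G : ℝ → ℝ := fun s => (max (min 1 (s + r0) - max 0 s) 0) ^ m with hG
  have hGcont : Continuous G := by
    apply Continuous.pow
    exact ((continuous_const.min (continuous_id.add continuous_const)).sub
      (continuous_const.max continuous_id)).max continuous_const
  have hsupp : Function.support G ⊆ Ioc (-r0) 1 := by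
    intro s hs
    by_contra hcon
    apply hs
    have : s ≤ -r0 ∨ 1 < s := by
      simp only [mem_Ioc, not_and_or, not_lt, not_le] at hcon
      tauto
    have hL : min 1 (s + r0) - max 0 s ≤ 0 := by
      rcases this with h | h
      · have : s + r0 ≤ 0 := by linarith
        have h2 : min 1 (s + r0) ≤ s + r0 := min_le_right _ _
        have h3 : (0:ℝ) ≤ max 0 s := le_max_left _ _
        linarith
      · have h2 : min 1 (s + r0) ≤ 1 := min_le_left _ _
        have h3 : s ≤ max 0 s := le_max_right _ _
        linarith
    have : max (min 1 (s + r0) - max 0 s) 0 = 0 := max_eq_right hL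
    simp [hG, this, zero_pow (by omega : m ≠ 0)]
  have hInt : Integrable G := by
    apply hGcont.integrable_of_hasCompactSupport
    exact HasCompactSupport.intro isCompact_Icc (fun x hx => by
      by_contra h
      exact hx (Ioc_subset_Icc_self (hsupp h)))
  have hiI : ∀ a b : ℝ, IntervalIntegrable G volume a b := fun a b =>
    hGcont.intervalIntegrable a b
  have step1 : ∫ s : ℝ, G s = ∫ s in (-r0)..1, G s :=
    (intervalIntegral.integral_eq_integral_of_support_subset hsupp).symm
  have i1 : ∫ s in (-r0)..(0:ℝ), G s = r0 ^ (m + 1) / (m + 1) := by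
    have : ∫ s in (-r0)..(0:ℝ), G s = ∫ s in (-r0)..(0:ℝ), (s + r0) ^ m := by
      apply intervalIntegral.integral_congr
      intro s hs
      rw [uIcc_of_le (by linarith)] at hs
      obtain ⟨hs1, hs2⟩ := hs
      have e1 : min 1 (s + r0) = s + r0 := min_eq_right (by linarith)
      have e2 : max 0 s = 0 := max_eq_left (by linarith)
      have e3 : max (min 1 (s + r0) - max 0 s) 0 = s + r0 := by
        rw [e1, e2, sub_zero]; exact max_eq_left (by linarith)
      simp [hG, e3]
    rw [this, intervalIntegral.integral_comp_add_right (fun u => u ^ m) r0]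
    simp [integral_pow]
  have i2 : ∫ s in (0:ℝ)..(1 - r0), G s = (1 - r0) * r0 ^ m := by
    have : ∫ s in (0:ℝ)..(1 - r0), G s = ∫ s in (0:ℝ)..(1 - r0), r0 ^ m := by
      apply intervalIntegral.integral_congr
      intro s hs
      rw [uIcc_of_le (by linarith)] at hs
      obtain ⟨hs1, hs2⟩ := hs
      have e1 : min 1 (s + r0) = s + r0 := min_eq_right (by linarith)
      have e2 : max 0 s = s := max_eq_right hs1
      have e3 : max (min 1 (s + r0) - max 0 s) 0 = r0 := by
        rw [e1, e2]
        have : s + r0 - s = r0 := by ring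
        rw [this]; exact max_eq_left h0.le
      simp [hG, e3]
    rw [this, intervalIntegral.integral_const]
    simp [smul_eq_mul]
  have i3 : ∫ s in (1 - r0)..(1:ℝ), G s = r0 ^ (m + 1) / (m + 1) := by
    have : ∫ s in (1 - r0)..(1:ℝ), G s = ∫ s in (1 - r0)..(1:ℝ), (1 - s) ^ m := by
      apply intervalIntegral.integral_congr
      intro s hs
      rw [uIcc_of_le (by linarith)] at hs
      obtain ⟨hs1, hs2⟩ := hs
      have e1 : min 1 (s + r0) = 1 := min_eq_left (by linarith)
      have e2 : max 0 s = s := max_eq_right (by linarith)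
      have e3 : max (min 1 (s + r0) - max 0 s) 0 = 1 - s := by
        rw [e1, e2]; exact max_eq_left (by linarith)
      simp [hG, e3]
    rw [this, intervalIntegral.integral_comp_sub_left (fun u => u ^ m) 1]
    simp [integral_pow]
  have split : ∫ s in (-r0)..1, G s
      = (∫ s in (-r0)..(0:ℝ), G s) + (∫ s in (0:ℝ)..(1 - r0), G s)
        + (∫ s in (1 - r0)..(1:ℝ), G s) := by
    rw [intervalIntegral.integral_add_adjacent_intervals (hiI _ _) (hiI _ _),
      intervalIntegral.integral_add_adjacent_intervals (hiI _ _) (hiI _ _)]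
  rw [step1, split, i1, i2, i3]
  ring

/-- For `m ≥ 2` and `1/2 < Δ < 1`,
`I_m(Δ) = ∫_{[0,1]^m} max(1 - Δ - Δ(max_i x_i - min_i x_i), 0) dx
        = ((1-Δ)/Δ)^m · (1 - 2m(1-Δ)/(m+1))`. -/
theorem stmt7 (m : ℕ) (hm : 2 ≤ m) (Δ : ℝ) (hΔ0 : 1 / 2 < Δ) (hΔ : Δ < 1) :
    ∫ x in (Set.univ.pi fun _ : Fin m => Icc (0:ℝ) 1),
        max (1 - Δ - Δ * (Finset.univ.sup' ⟨⟨0, by omega⟩, Finset.mem_univ _⟩ x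
          - Finset.univ.inf' ⟨⟨0, by omega⟩, Finset.mem_univ _⟩ x)) 0
      = ((1 - Δ) / Δ) ^ m * (1 - 2 * m * (1 - Δ) / (m + 1)) := by
  have hΔpos : (0:ℝ) < Δ := by linarith
  set r0 : ℝ := (1 - Δ) / Δ with hr0def
  have hr0pos : 0 < r0 := div_pos (by linarith) hΔpos
  have hr0lt : r0 < 1 := by
    rw [hr0def, div_lt_one hΔpos]; linarith
  have hne : (Finset.univ : Finset (Fin m)).Nonempty :=
    ⟨⟨0, by omega⟩, Finset.mem_univ _⟩
  set M : (Fin m → ℝ) → ℝ := fun x => Finset.univ.sup' hne x with hM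
  set mn : (Fin m → ℝ) → ℝ := fun x => Finset.univ.inf' hne x with hmn
  set P : Set (Fin m → ℝ) := Set.univ.pi fun _ : Fin m => Icc (0:ℝ) 1 with hP
  have hPmeas : MeasurableSet P :=
    MeasurableSet.univ_pi fun i => measurableSet_Icc
  -- measurability of sup'/inf'
  have msup : Measurable M := by
    have h := Finset.measurable_sup' (s := (Finset.univ : Finset (Fin m))) hne
      (f := fun i : Fin m => fun x : Fin m → ℝ => x i)
      (fun i _ => measurable_pi_apply i)
    convert h using 1
    funext x
    simp [hM, Finset.sup'_apply]
  have minf : Measurable mn := by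
    have h : Measurable ((Finset.univ : Finset (Fin m)).inf' hne
        (fun i : Fin m => fun x : Fin m → ℝ => x i)) :=
      Finset.inf'_induction hne _ (fun _f hf _g hg => hf.inf hg)
        (fun i _ => measurable_pi_apply i)
    convert h using 1
    funext x
    simp [hmn, Finset.inf'_apply]
  set f : (Fin m → ℝ) → ℝ := fun x => max (1 - Δ - Δ * (M x - mn x)) 0 with hf
  have hfmeas : Measurable f :=
    ((measurable_const.sub (measurable_const.mul (msup.sub minf))).max measurable_const)
  -- Step 1: convert to lintegral
  have step1 : ∫ x in P, f x
      = (∫⁻ x in P, ENNReal.ofReal (f x)).toReal := by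
    apply integral_eq_lintegral_of_nonneg_ae
    · exact Filter.Eventually.of_forall fun x => le_max_right _ _
    · exact hfmeas.aestronglyMeasurable
  -- pointwise: ofReal (f x) = ofReal Δ * volume (Icc (M x - r0) (mn x))
  have hΔr0 : Δ * r0 = 1 - Δ := by
    rw [hr0def]; field_simp
  have ptwise : ∀ x, ENNReal.ofReal (f x)
      = ENNReal.ofReal Δ * volume (Icc (M x - r0) (mn x)) := by
    intro x
    rw [Real.volume_Icc, ← ENNReal.ofReal_mul hΔpos.le]
    have e1 : f x = max (Δ * (mn x - (M x - r0))) 0 := by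
      rw [hf]
      congr 1
      rw [mul_sub, mul_sub, hΔr0]
      ring
    rw [e1]
    rcases le_total (Δ * (mn x - (M x - r0))) 0 with h | h
    · rw [max_eq_right h, ENNReal.ofReal_of_nonpos h, ENNReal.ofReal_zero]
    · rw [max_eq_left h]
  -- Step 2: the product set B
  set B : Set ((Fin m → ℝ) × ℝ) :=
    {p | ∀ i, p.1 i ∈ Icc (0:ℝ) 1 ∧ p.2 ≤ p.1 i ∧ p.1 i ≤ p.2 + r0} with hB
  have hBmeas : MeasurableSet B := by
    have : B = ⋂ i : Fin m,
        ({p : (Fin m → ℝ) × ℝ | p.1 i ∈ Icc (0:ℝ) 1}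
          ∩ {p | p.2 ≤ p.1 i} ∩ {p | p.1 i ≤ p.2 + r0}) := by
      ext p
      simp only [hB, mem_setOf_eq, mem_iInter, mem_inter_iff]
      exact ⟨fun h i => ⟨⟨(h i).1, (h i).2.1⟩, (h i).2.2⟩,
        fun h i => ⟨(h i).1.1, (h i).1.2, (h i).2⟩⟩
    rw [this]
    apply MeasurableSet.iInter
    intro i
    have m1 : Measurable fun p : (Fin m → ℝ) × ℝ => p.1 i :=
      (measurable_pi_apply i).comp measurable_fst
    exact ((m1 measurableSet_Icc).inter
        (measurableSet_le measurable_snd m1)).inter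
      (measurableSet_le m1 (measurable_snd.add measurable_const))
  -- sections over x
  have key1 : (volume.prod volume) B = ∫⁻ x in P, volume (Icc (M x - r0) (mn x)) := by
    rw [Measure.prod_apply hBmeas, ← lintegral_indicator hPmeas _]
    congr 1
    funext x
    by_cases hx : x ∈ P
    · rw [indicator_of_mem hx]
      congr 1
      ext s
      simp only [hB, mem_preimage, mem_setOf_eq, mem_Icc]
      constructor
      · intro h
        constructor
        · rw [sub_le_iff_le_add]
          exact Finset.sup'_le hne _ fun i _ => (h i).2.2
        · exact Finset.le_inf' hne _ fun i _ => (h i).2.1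
      · intro ⟨h1, h2⟩ i
        have hxi := hx i (mem_univ i)
        refine ⟨hxi, le_trans h2 (Finset.inf'_le _ (Finset.mem_univ i)), ?_⟩
        have : x i ≤ M x := Finset.le_sup' _ (Finset.mem_univ i)
        linarith [sub_le_iff_le_add.mp h1]
    · rw [indicator_of_notMem hx]
      have : Prod.mk x ⁻¹' B = ∅ := by
        ext s
        simp only [hB, mem_preimage, mem_setOf_eq, mem_empty_iff_false, iff_false]
        intro h
        apply hx
        intro i _
        exact (h i).1
      rw [this, measure_empty]
  -- sections over s
  have key2 : (volume.prod volume) B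
      = ∫⁻ s : ℝ, (ENNReal.ofReal (min 1 (s + r0) - max 0 s)) ^ m := by
    rw [Measure.prod_apply_symm hBmeas]
    congr 1
    funext s
    have hpre : (fun x : Fin m → ℝ => (x, s)) ⁻¹' B
        = Set.univ.pi fun _ : Fin m => Icc (0:ℝ) 1 ∩ Icc s (s + r0) := by
      ext x
      simp only [hB, mem_preimage, mem_setOf_eq, mem_pi, mem_univ, forall_true_left,
        mem_inter_iff, mem_Icc]
    rw [hpre, volume_pi_pi]
    rw [Icc_inter_Icc, Real.volume_Icc]
    have : (1:ℝ) ⊓ (s + r0) - 0 ⊔ s = min 1 (s + r0) - max 0 s := rfl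
    rw [this, Finset.prod_const, Finset.card_univ, Fintype.card_fin]
  -- compute the s-integral
  have key3 : ∫⁻ s : ℝ, (ENNReal.ofReal (min 1 (s + r0) - max 0 s)) ^ m
      = ENNReal.ofReal (2 * (r0 ^ (m + 1) / (m + 1)) + (1 - r0) * r0 ^ m) := by
    have ptw : ∀ s : ℝ, (ENNReal.ofReal (min 1 (s + r0) - max 0 s)) ^ m
        = ENNReal.ofReal ((max (min 1 (s + r0) - max 0 s) 0) ^ m) := by
      intro s
      rw [ENNReal.ofReal_pow (le_max_right _ _)]
      congr 1
      rcases le_total (min 1 (s + r0) - max 0 s) 0 with h | h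
      · rw [max_eq_right h, ENNReal.ofReal_of_nonpos h, ENNReal.ofReal_zero]
      · rw [max_eq_left h]
    simp_rw [ptw]
    rw [← ofReal_integral_eq_lintegral_ofReal]
    · rw [stmt7_integral_len r0 hr0pos hr0lt m (by omega)]
    · -- integrability
      have hGcont : Continuous fun s : ℝ => (max (min 1 (s + r0) - max 0 s) 0) ^ m :=
        (((continuous_const.min (continuous_id.add continuous_const)).sub
          (continuous_const.max continuous_id)).max continuous_const).pow m
      apply hGcont.integrable_of_hasCompactSupport
      apply HasCompactSupport.intro (isCompact_Icc (a := -r0) (b := 1))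
      intro s hs
      simp only [mem_Icc, not_and_or, not_le] at hs
      have hL : min 1 (s + r0) - max 0 s ≤ 0 := by
        rcases hs with h | h
        · have h2 : min 1 (s + r0) ≤ s + r0 := min_le_right _ _
          have h3 : (0:ℝ) ≤ max 0 s := le_max_left _ _
          linarith
        · have h2 : min 1 (s + r0) ≤ 1 := min_le_left _ _
          have h3 : s ≤ max 0 s := le_max_right _ _
          linarith
      rw [max_eq_right hL, zero_pow (by omega : m ≠ 0)]
    · exact Filter.Eventually.of_forall fun s => by positivity
  -- put it together
  have main : ∫⁻ x in P, ENNReal.ofReal (f x)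
      = ENNReal.ofReal Δ
        * ENNReal.ofReal (2 * (r0 ^ (m + 1) / (m + 1)) + (1 - r0) * r0 ^ m) := by
    simp_rw [ptwise]
    rw [lintegral_const_mul' _ _ ENNReal.ofReal_ne_top, ← key1, key2, key3]
  have goal_eq : ∫ x in P, f x
      = Δ * (2 * (r0 ^ (m + 1) / (m + 1)) + (1 - r0) * r0 ^ m) := by
    have hJ : (0:ℝ) ≤ 2 * (r0 ^ (m + 1) / (m + 1)) + (1 - r0) * r0 ^ m :=
      add_nonneg (by positivity) (mul_nonneg (by linarith) (by positivity))
    rw [step1, main, ENNReal.toReal_mul, ENNReal.toReal_ofReal hΔpos.le,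
      ENNReal.toReal_ofReal hJ]
  calc ∫ x in P, f x
      = Δ * (2 * (r0 ^ (m + 1) / (m + 1)) + (1 - r0) * r0 ^ m) := goal_eq
    _ = ((1 - Δ) / Δ) ^ m * (1 - 2 * m * (1 - Δ) / (m + 1)) := by
        rw [hr0def]
        have h1 : Δ ≠ 0 := ne_of_gt hΔpos
        have h2 : (m:ℝ) + 1 ≠ 0 := by positivity
        rw [pow_succ]
        field_simp
        ring
end

section
/- Let S = (S_1, ..., S_d) with S_w > 0 and let F_S(y) = (Σ_w S_w y^{1/S_w}) / (Σ_w S_w) for y ∈ [0,1]. Then for any fixed y ∈ [0,1], the map S ↦ F_S(y) is Schur-convex: if S is majorized by S', then F_S(y) ≤ F_{S'}(y). -/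
open Finset

/-- The sum of the `k` largest entries of `x`, realized as the supremum of sums of
`x` over subsets of cardinality `k`. -/
noncomputable def kLargestSum {d : ℕ} (x : Fin d → ℝ) (k : ℕ) : ℝ :=
  sSup {t : ℝ | ∃ s : Finset (Fin d), s.card = k ∧ t = ∑ i ∈ s, x i}

/-- `x` is majorized by `y`: for every `k`, the sum of the `k` largest entries of `x`
is at most that of `y`, and the total sums agree. -/
def MajorizedBy {d : ℕ} (x y : Fin d → ℝ) : Prop :=
  (∀ k : ℕ, k ≤ d → kLargestSum x k ≤ kLargestSum y k) ∧ ∑ i, x i = ∑ i, y i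

/-! ### Auxiliary lemmas -/

lemma kls_finite {d : ℕ} (x : Fin d → ℝ) (k : ℕ) :
    {t : ℝ | ∃ s : Finset (Fin d), s.card = k ∧ t = ∑ i ∈ s, x i}.Finite := by
  apply Set.Finite.subset (Set.finite_range (fun s : Finset (Fin d) => ∑ i ∈ s, x i))
  rintro t ⟨s, -, rfl⟩
  exact ⟨s, rfl⟩

lemma le_kLargestSum {d : ℕ} (x : Fin d → ℝ) {k : ℕ} {s : Finset (Fin d)}
    (h : s.card = k) : ∑ i ∈ s, x i ≤ kLargestSum x k :=
  le_csSup (kls_finite x k).bddAbove ⟨s, h, rfl⟩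

lemma kLargestSum_mem {d : ℕ} (x : Fin d → ℝ) {k : ℕ} (hk : k ≤ d) :
    ∃ s : Finset (Fin d), s.card = k ∧ kLargestSum x k = ∑ i ∈ s, x i := by
  obtain ⟨s, -, hcard⟩ := Finset.exists_subset_card_eq (show k ≤ (univ : Finset (Fin d)).card by simpa using hk)
  have hne : {t : ℝ | ∃ s : Finset (Fin d), s.card = k ∧ t = ∑ i ∈ s, x i}.Nonempty :=
    ⟨∑ i ∈ s, x i, s, hcard, rfl⟩
  exact hne.csSup_mem (kls_finite x k)

/-- The "top `k` indices" of `Fin d`. -/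
def topk {d k : ℕ} (hk : k ≤ d) : Finset (Fin d) :=
  (univ : Finset (Fin k)).map (Fin.castLEEmb hk)

lemma card_topk {d k : ℕ} (hk : k ≤ d) : (topk hk).card = k := by
  simp [topk]

lemma sum_topk {d k : ℕ} (hk : k ≤ d) (v : Fin d → ℝ) :
    ∑ i ∈ topk hk, v i = ∑ i ∈ range k, (if h : i < d then v ⟨i, h⟩ else 0) := by
  rw [topk, Finset.sum_map, ← Fin.sum_univ_eq_sum_range]
  apply Finset.sum_congr rfl
  intro j _
  rw [dif_pos (lt_of_lt_of_le j.2 hk)]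
  exact congrArg v (Fin.ext (by simp))

lemma val_le_orderEmb {k d : ℕ} (e : Fin k ↪o Fin d) (j : Fin k) : (j : ℕ) ≤ (e j : ℕ) := by
  have H : ∀ n : ℕ, ∀ j : Fin k, (j : ℕ) = n → n ≤ (e j : ℕ) := by
    intro n
    induction n with
    | zero => intro j _; exact Nat.zero_le _
    | succ n ih =>
        intro j hn
        have hj' : n < k := by omega
        have h1 := ih ⟨n, hj'⟩ rfl
        have h2 : e ⟨n, hj'⟩ < e j := e.strictMono (by simp [Fin.lt_def, hn])
        rw [Fin.lt_def] at h2
        omega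
  exact H _ j rfl

lemma sum_le_topk {d k : ℕ} (hk : k ≤ d) {v : Fin d → ℝ} (hv : Antitone v)
    {s : Finset (Fin d)} (hs : s.card = k) :
    ∑ i ∈ s, v i ≤ ∑ i ∈ topk hk, v i := by
  set e := s.orderEmbOfFin hs with he
  have hrange : s = (univ : Finset (Fin k)).map e.toEmbedding := by
    ext i
    simp only [Finset.mem_map, Finset.mem_univ, true_and]
    constructor
    · intro hi
      have : i ∈ Set.range e := by rw [Finset.range_orderEmbOfFin]; exact hi
      obtain ⟨j, hj⟩ := this
      exact ⟨j, hj⟩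
    · rintro ⟨j, rfl⟩
      exact Finset.orderEmbOfFin_mem s hs j
  rw [hrange, Finset.sum_map, topk, Finset.sum_map]
  apply Finset.sum_le_sum
  intro j _
  apply hv
  rw [Fin.le_def]
  exact val_le_orderEmb e j

/-! ### Analytic lemmas: convexity of `s ↦ s * exp (t / s)` on `(0, ∞)` -/

noncomputable def fconv (t s : ℝ) : ℝ := s * Real.exp (t / s)

noncomputable def gconv (t s : ℝ) : ℝ := Real.exp (t / s) * (1 - t / s)

lemma hasDerivAt_div_const' (t : ℝ) {s : ℝ} (hs : s ≠ 0) :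
    HasDerivAt (fun u => t / u) (-(t / s ^ 2)) s := by
  have h := (hasDerivAt_inv hs).const_mul t
  simpa [div_eq_mul_inv, mul_comm, neg_mul, mul_neg, sq, mul_inv] using h

lemma hasDerivAt_fconv (t : ℝ) {s : ℝ} (hs : s ≠ 0) :
    HasDerivAt (fconv t) (gconv t s) s := by
  have h2 := (hasDerivAt_div_const' t hs).exp
  have h3 := (hasDerivAt_id s).mul h2
  refine h3.congr_deriv ?_
  unfold gconv
  field_simp
  simp only [id_eq]
  ring

lemma hasDerivAt_gconv (t : ℝ) {s : ℝ} (hs : s ≠ 0) :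
    HasDerivAt (gconv t) (Real.exp (t / s) * (t ^ 2 / s ^ 4 * s)) s := by
  have h1 := (hasDerivAt_div_const' t hs).exp
  have h2 : HasDerivAt (fun u => 1 - t / u) (-(-(t / s ^ 2))) s :=
    (hasDerivAt_div_const' t hs).const_sub 1
  have h3 := h1.mul h2
  refine h3.congr_deriv ?_
  field_simp
  ring

lemma gconv_mono (t : ℝ) : MonotoneOn (gconv t) (Set.Ioi 0) := by
  apply monotoneOn_of_deriv_nonneg (convex_Ioi 0)
  · intro x hx
    exact (hasDerivAt_gconv t (ne_of_gt hx)).continuousAt.continuousWithinAt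
  · intro x hx
    rw [interior_Ioi] at hx
    exact (hasDerivAt_gconv t (ne_of_gt hx)).differentiableAt.differentiableWithinAt
  · intro x hx
    rw [interior_Ioi] at hx
    rw [(hasDerivAt_gconv t (ne_of_gt hx)).deriv]
    have hx' : (0:ℝ) < x := hx
    positivity

lemma subgrad (t : ℝ) {a b : ℝ} (ha : 0 < a) (hb : 0 < b) :
    fconv t a + gconv t a * (b - a) ≤ fconv t b := by
  rcases lt_trichotomy a b with hab | hab | hab
  · obtain ⟨c, hc, hceq⟩ := exists_hasDerivAt_eq_slope (fconv t) (gconv t) hab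
      (fun x hx => (hasDerivAt_fconv t (ne_of_gt (lt_of_lt_of_le ha hx.1))).continuousAt.continuousWithinAt)
      (fun x hx => hasDerivAt_fconv t (ne_of_gt (lt_trans ha hx.1)))
    have hca : gconv t a ≤ gconv t c :=
      gconv_mono t (Set.mem_Ioi.2 ha) (Set.mem_Ioi.2 (lt_trans ha hc.1)) (le_of_lt hc.1)
    have heq : fconv t b - fconv t a = gconv t c * (b - a) := by
      rw [hceq, div_mul_cancel₀ _ (ne_of_gt (sub_pos.2 hab))]
    nlinarith [sub_pos.2 hab]
  · subst hab; simp
  · obtain ⟨c, hc, hceq⟩ := exists_hasDerivAt_eq_slope (fconv t) (gconv t) hab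
      (fun x hx => (hasDerivAt_fconv t (ne_of_gt (lt_of_lt_of_le hb hx.1))).continuousAt.continuousWithinAt)
      (fun x hx => hasDerivAt_fconv t (ne_of_gt (lt_trans hb hx.1)))
    have hca : gconv t c ≤ gconv t a :=
      gconv_mono t (Set.mem_Ioi.2 (lt_trans hb hc.1)) (Set.mem_Ioi.2 ha) (le_of_lt hc.2)
    have heq : fconv t a - fconv t b = gconv t c * (a - b) := by
      rw [hceq, div_mul_cancel₀ _ (ne_of_gt (sub_pos.2 hab))]
    nlinarith [sub_pos.2 hab]

/-! ### Abel summation -/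

lemma abel_nonneg (d : ℕ) (c Δ : ℕ → ℝ) (hc : Antitone c)
    (hΔ : ∀ k ≤ d, 0 ≤ Δ k) (h0 : Δ 0 = 0) (hd : Δ d = 0) :
    0 ≤ ∑ i ∈ range d, c i * (Δ (i + 1) - Δ i) := by
  have key : ∑ i ∈ range d, c i * (Δ (i + 1) - Δ i)
      = ∑ i ∈ range d, (c i - c (i + 1)) * Δ (i + 1) + (c d * Δ d - c 0 * Δ 0) := by
    rw [← Finset.sum_range_sub (fun i => c i * Δ i) d, ← Finset.sum_add_distrib]
    apply Finset.sum_congr rfl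
    intros; ring
  rw [key, hd, h0]
  have : 0 ≤ ∑ i ∈ range d, (c i - c (i + 1)) * Δ (i + 1) := by
    apply Finset.sum_nonneg
    intro i hi
    exact mul_nonneg (sub_nonneg.2 (hc (Nat.le_succ i))) (hΔ (i + 1) (Finset.mem_range.1 hi))
  simpa using this

/-- Schur-convexity of `S ↦ F_S(y) = (Σ_w S_w y^{1/S_w}) / (Σ_w S_w)` for fixed
`y ∈ [0,1]`: if `S` is majorized by `S'`, then `F_S(y) ≤ F_{S'}(y)`. -/
theorem stmt8 {d : ℕ} (S S' : Fin d → ℝ)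
    (hS : ∀ w, 0 < S w) (hS' : ∀ w, 0 < S' w)
    (hmaj : MajorizedBy S S')
    (y : ℝ) (hy : y ∈ Set.Icc (0:ℝ) 1) :
    (∑ w, S w * y ^ (1 / S w)) / (∑ w, S w)
      ≤ (∑ w, S' w * y ^ (1 / S' w)) / (∑ w, S' w) := by
  rcases Nat.eq_zero_or_pos d with hd0 | hd0
  · subst hd0; simp
  have : Nonempty (Fin d) := ⟨⟨0, hd0⟩⟩
  have hsum : ∑ i, S i = ∑ i, S' i := hmaj.2
  have hden : (0:ℝ) < ∑ w, S w :=
    Finset.sum_pos (fun i _ => hS i) Finset.univ_nonempty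
  rcases eq_or_lt_of_le hy.1 with hy0 | hypos
  · -- y = 0
    have hz : ∀ (Z : Fin d → ℝ), (∀ w, 0 < Z w) → ∑ w, Z w * y ^ (1 / Z w) = 0 := by
      intro Z hZ
      apply Finset.sum_eq_zero
      intro w _
      have := hZ w
      rw [← hy0, Real.zero_rpow (by positivity), mul_zero]
    rw [hz S hS, hz S' hS']
    simp
  · -- y > 0
    set t := Real.log y with ht
    have hrw : ∀ (Z : Fin d → ℝ), (∀ w, 0 < Z w) →
        ∑ w, Z w * y ^ (1 / Z w) = ∑ w, fconv t (Z w) := by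
      intro Z hZ
      apply Finset.sum_congr rfl
      intro w _
      rw [Real.rpow_def_of_pos hypos, fconv, mul_one_div]
    rw [hrw S hS, hrw S' hS', ← hsum, div_le_div_iff₀ hden hden]
    apply mul_le_mul_of_nonneg_right ?_ hden.le
    -- sort both vectors in decreasing order
    obtain ⟨σ, hxa⟩ : ∃ σ : Equiv.Perm (Fin d), Antitone (fun i => S (σ i)) :=
      ⟨Tuple.sort (fun i => -S i), by
        intro i j hij
        have h := Tuple.monotone_sort (fun i => -S i) hij
        simp only [Function.comp_apply] at h
        simpa using h⟩
    obtain ⟨σ', hya⟩ : ∃ σ' : Equiv.Perm (Fin d), Antitone (fun i => S' (σ' i)) :=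
      ⟨Tuple.sort (fun i => -S' i), by
        intro i j hij
        have h := Tuple.monotone_sort (fun i => -S' i) hij
        simp only [Function.comp_apply] at h
        simpa using h⟩
    set xe : ℕ → ℝ := fun n => if h : n < d then S (σ ⟨n, h⟩) else 0 with hxe
    set ye : ℕ → ℝ := fun n => if h : n < d then S' (σ' ⟨n, h⟩) else 0 with hye
    have hxsum : ∀ k, ∀ hk : k ≤ d,
        ∑ i ∈ range k, xe i = ∑ i ∈ (topk hk).map σ.toEmbedding, S i := by
      intro k hk
      rw [Finset.sum_map]
      simp only [Equiv.coe_toEmbedding]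
      exact (sum_topk hk (fun i => S (σ i))).symm
    have hysum : ∀ k, ∀ hk : k ≤ d,
        ∑ i ∈ range k, ye i = ∑ i ∈ topk hk, (fun i => S' (σ' i)) i := by
      intro k hk
      exact (sum_topk hk (fun i => S' (σ' i))).symm
    have hXY : ∀ k, k ≤ d → ∑ i ∈ range k, xe i ≤ ∑ i ∈ range k, ye i := by
      intro k hk
      have h1 : ∑ i ∈ range k, xe i ≤ kLargestSum S k := by
        rw [hxsum k hk]
        exact le_kLargestSum S (by simp [Finset.card_map, card_topk hk])
      have h2 : kLargestSum S' k ≤ ∑ i ∈ range k, ye i := by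
        obtain ⟨s, hcard, heq⟩ := kLargestSum_mem S' hk
        rw [heq, hysum k hk]
        have hs2 : ∑ i ∈ s, S' i = ∑ j ∈ s.map σ'.symm.toEmbedding, S' (σ' j) := by
          rw [Finset.sum_map]
          apply Finset.sum_congr rfl
          intro i _
          simp
        rw [hs2]
        exact sum_le_topk hk hya (by simp [hcard])
      exact h1.trans ((hmaj.1 k hk).trans h2)
    have hXd : ∑ i ∈ range d, xe i = ∑ w, S w := by
      rw [hxsum d le_rfl]
      have huniv : (topk (le_refl d)).map σ.toEmbedding = univ :=
        Finset.eq_univ_of_card _ (by simp [Finset.card_map, card_topk])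
      rw [huniv]
    have hYd : ∑ i ∈ range d, ye i = ∑ w, S' w := by
      rw [hysum d le_rfl]
      have hs2 : ∑ i ∈ topk (le_refl d), (fun i => S' (σ' i)) i = ∑ i ∈ univ, S' (σ' i) := by
        congr 1
        exact Finset.eq_univ_of_card _ (by simp [card_topk])
      rw [hs2]
      exact Equiv.sum_comp σ' S'
    have hxpos : ∀ i, i < d → 0 < xe i := by
      intro i hi
      simpa [hxe, dif_pos hi] using hS (σ ⟨i, hi⟩)
    have hypos' : ∀ i, i < d → 0 < ye i := by
      intro i hi
      simpa [hye, dif_pos hi] using hS' (σ' ⟨i, hi⟩)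
    have hxe_anti : ∀ m n : ℕ, m ≤ n → n < d → xe n ≤ xe m := by
      intro m n hmn hn
      have hm : m < d := lt_of_le_of_lt hmn hn
      simp only [hxe, dif_pos hm, dif_pos hn]
      exact hxa (show (⟨m, hm⟩ : Fin d) ≤ ⟨n, hn⟩ from hmn)
    have hd1 : d - 1 < d := by omega
    set c : ℕ → ℝ := fun i => gconv t (xe (min i (d - 1))) with hc
    have hcanti : Antitone c := by
      intro i j hij
      have hmj : min j (d - 1) < d := lt_of_le_of_lt (min_le_right _ _) hd1
      have hle : xe (min j (d - 1)) ≤ xe (min i (d - 1)) :=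
        hxe_anti _ _ (min_le_min hij le_rfl) hmj
      exact gconv_mono t (Set.mem_Ioi.2 (hxpos _ hmj))
        (Set.mem_Ioi.2 (hxpos _ (lt_of_le_of_lt (min_le_right _ _) hd1))) hle
    have hterm : ∀ i ∈ range d, fconv t (xe i) + c i * (ye i - xe i) ≤ fconv t (ye i) := by
      intro i hi
      have hi' : i < d := Finset.mem_range.1 hi
      have hmin : min i (d - 1) = i := by omega
      have hci : c i = gconv t (xe i) := by rw [hc]; simp [hmin]
      rw [hci]
      exact subgrad t (hxpos i hi') (hypos' i hi')
    set Δ : ℕ → ℝ := fun k => ∑ i ∈ range k, ye i - ∑ i ∈ range k, xe i with hΔdef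
    have habel : 0 ≤ ∑ i ∈ range d, c i * (Δ (i + 1) - Δ i) :=
      abel_nonneg d c Δ hcanti (fun k hk => sub_nonneg.2 (hXY k hk))
        (by simp [hΔdef]) (by simp [hΔdef, hXd, hYd, hsum])
    have hΔstep : ∀ i : ℕ, Δ (i + 1) - Δ i = ye i - xe i := by
      intro i
      simp only [hΔdef, Finset.sum_range_succ]
      ring
    have h2 : 0 ≤ ∑ i ∈ range d, c i * (ye i - xe i) := by
      have := habel
      simp_rw [hΔstep] at this
      exact this
    have h1 : ∑ i ∈ range d, fconv t (xe i) + ∑ i ∈ range d, c i * (ye i - xe i)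
        ≤ ∑ i ∈ range d, fconv t (ye i) := by
      rw [← Finset.sum_add_distrib]
      exact Finset.sum_le_sum hterm
    have hfx : ∑ i ∈ range d, fconv t (xe i) = ∑ w, fconv t (S w) := by
      rw [← Fin.sum_univ_eq_sum_range (fun i => fconv t (xe i)) d,
        ← Equiv.sum_comp σ (fun w => fconv t (S w))]
      apply Finset.sum_congr rfl
      intro i _
      simp only [hxe, i.isLt, dif_pos]
    have hfy : ∑ i ∈ range d, fconv t (ye i) = ∑ w, fconv t (S' w) := by
      rw [← Fin.sum_univ_eq_sum_range (fun i => fconv t (ye i)) d,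
        ← Equiv.sum_comp σ' (fun w => fconv t (S' w))]
      apply Finset.sum_congr rfl
      intro i _
      simp only [hye, i.isLt, dif_pos]
    rw [← hfx, ← hfy]
    linarith
end

section
/- Fix integers m ≥ 2 (effective unit size) and Δ ∈ (0, 1/2]. Define K_Δ = {S ∈ ℝ^d : 0 ≤ S_w ≤ 1-Δ for all w, (1-Δ)/(1 + Δ/(m-1)) ≤ Σ_w S_w ≤ 1, and max_w S_w/(1-Δ) ≤ 1 - (1 - Σ_w S_w)/m}. Then K_Δ is a convex polytope whose extreme points are exactly the coordinate permutations of P* = (1-Δ, Δ, 0, ..., 0) and S* = ((1-Δ)/(1 + Δ/(m-1)), 0, ..., 0). -/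
open Set Finset

namespace Stmt12

/-- lower bound on the sum -/
noncomputable def Lv (m : ℕ) (Δ : ℝ) : ℝ := (1 - Δ) / (1 + Δ / ((m : ℝ) - 1))
/-- upper bound on coordinates, as a function of the sum -/
noncomputable def Mv (m : ℕ) (Δ : ℝ) (s : ℝ) : ℝ := (1 - Δ) * (1 - (1 - s) / (m : ℝ))

def Kset (d m : ℕ) (Δ : ℝ) : Set (Fin d → ℝ) :=
  {S | (∀ w, 0 ≤ S w ∧ S w ≤ 1 - Δ) ∧
    Lv m Δ ≤ ∑ w, S w ∧ (∑ w, S w) ≤ 1 ∧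
    (∀ w, S w / (1 - Δ) ≤ 1 - (1 - ∑ w', S w') / (m : ℝ))}

noncomputable def Pv (d : ℕ) (Δ : ℝ) : Fin d → ℝ :=
  fun i => if (i : ℕ) = 0 then 1 - Δ else if (i : ℕ) = 1 then Δ else 0

noncomputable def Sv (d m : ℕ) (Δ : ℝ) : Fin d → ℝ :=
  fun i => if (i : ℕ) = 0 then Lv m Δ else 0

section Basic

variable {d m : ℕ} {Δ : ℝ} (hd : 2 ≤ d) (hm : 2 ≤ m) (hΔ0 : 0 < Δ) (hΔ2 : Δ ≤ 1/2)

lemma hm1 (hm : 2 ≤ m) : (1:ℝ) ≤ (m:ℝ) - 1 := by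
  have : (2:ℝ) ≤ (m:ℝ) := by exact_mod_cast hm
  linarith

lemma hmpos (hm : 2 ≤ m) : (0:ℝ) < (m:ℝ) := by
  have := hm1 hm; linarith

lemma oneSubΔ_pos (hΔ2 : Δ ≤ 1/2) : 0 < 1 - Δ := by linarith

lemma Ldenom_pos (hm : 2 ≤ m) (hΔ0 : 0 < Δ) : 0 < 1 + Δ / ((m:ℝ) - 1) := by
  have := hm1 hm
  have : 0 < Δ / ((m:ℝ) - 1) := div_pos hΔ0 (by linarith)
  linarith

lemma L_eq (hm : 2 ≤ m) (hΔ0 : 0 < Δ) :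
    Lv m Δ * ((m:ℝ) - 1 + Δ) = (1 - Δ) * ((m:ℝ) - 1) := by
  have h1 := hm1 hm
  rw [Lv]
  field_simp

lemma L_pos (hm : 2 ≤ m) (hΔ0 : 0 < Δ) (hΔ2 : Δ ≤ 1/2) : 0 < Lv m Δ :=
  div_pos (by linarith) (Ldenom_pos hm hΔ0)

lemma L_le_one (hm : 2 ≤ m) (hΔ0 : 0 < Δ) (hΔ2 : Δ ≤ 1/2) : Lv m Δ ≤ 1 := by
  have h1 := hm1 hm
  have h2 := Ldenom_pos hm hΔ0
  rw [Lv, div_le_one h2]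
  have : 0 ≤ Δ / ((m:ℝ) - 1) := le_of_lt (div_pos hΔ0 (by linarith))
  linarith

lemma M_eq (hm : 2 ≤ m) (s : ℝ) : Mv m Δ s * (m:ℝ) = (1 - Δ) * ((m:ℝ) - 1 + s) := by
  have h := (hmpos hm).ne'
  rw [Mv]
  calc (1 - Δ) * (1 - (1 - s) / ↑m) * ↑m = (1 - Δ) * (1 * ↑m - (1 - s) / ↑m * ↑m) := by ring
  _ = (1 - Δ) * (1 * ↑m - (1 - s)) := by rw [div_mul_cancel₀ _ h]
  _ = (1 - Δ) * (↑m - 1 + s) := by ring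

lemma M_L (hm : 2 ≤ m) (hΔ0 : 0 < Δ) : Mv m Δ (Lv m Δ) = Lv m Δ := by
  have h := hmpos hm
  have h1 := M_eq (Δ := Δ) hm (Lv m Δ)
  have h2 := L_eq hm hΔ0
  have : Mv m Δ (Lv m Δ) * (m:ℝ) = Lv m Δ * (m:ℝ) := by nlinarith [h1, h2]
  exact mul_right_cancel₀ (ne_of_gt h) this

lemma M_one (hm : 2 ≤ m) : Mv m Δ 1 = 1 - Δ := by
  have h := hmpos hm
  rw [Mv]; field_simp; ring

lemma M_le (hm : 2 ≤ m) (hΔ2 : Δ ≤ 1/2) {s : ℝ} (hs : s ≤ 1) : Mv m Δ s ≤ 1 - Δ := by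
  have h := hmpos hm
  have h1 := M_eq (Δ := Δ) hm s
  nlinarith

lemma M_nonneg (hm : 2 ≤ m) (hΔ2 : Δ ≤ 1/2) {s : ℝ} (hs : 0 ≤ s) : 0 ≤ Mv m Δ s := by
  have h := hmpos hm
  have h1 := M_eq (Δ := Δ) hm s
  have h2 := hm1 hm
  nlinarith

lemma M_pos (hm : 2 ≤ m) (hΔ2 : Δ ≤ 1/2) {s : ℝ} (hs : 0 ≤ s) : 0 < Mv m Δ s := by
  have h := hmpos hm
  have h1 := M_eq (Δ := Δ) hm s
  have h2 := hm1 hm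
  nlinarith

lemma M_shift (hm : 2 ≤ m) (s t : ℝ) : Mv m Δ (s + t) = Mv m Δ s + (1 - Δ) * t / m := by
  have h := hmpos hm
  rw [Mv, Mv]; field_simp; ring

/-- membership criterion using `Mv` -/
lemma mem_K' (hm : 2 ≤ m) (hΔ2 : Δ ≤ 1/2) {S : Fin d → ℝ}
    (h0 : ∀ w, 0 ≤ S w) (hL : Lv m Δ ≤ ∑ w, S w) (h1 : ∑ w, S w ≤ 1)
    (hM : ∀ w, S w ≤ Mv m Δ (∑ w, S w)) : S ∈ Kset d m Δ := by
  have hΔ' : 0 < 1 - Δ := by linarith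
  have hmle := M_le (Δ := Δ) hm hΔ2 h1
  refine ⟨fun w => ⟨h0 w, le_trans (hM w) hmle⟩, hL, h1, fun w => ?_⟩
  rw [div_le_iff₀ hΔ']
  have := hM w
  rw [Mv] at this
  linarith [this]

/-- unpack membership into `Mv` form -/
lemma mem_K_dest (hm : 2 ≤ m) (hΔ2 : Δ ≤ 1/2) {S : Fin d → ℝ} (h : S ∈ Kset d m Δ) :
    (∀ w, 0 ≤ S w) ∧ Lv m Δ ≤ ∑ w, S w ∧ (∑ w, S w) ≤ 1 ∧
      (∀ w, S w ≤ Mv m Δ (∑ w, S w)) := by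
  obtain ⟨h01, hL, h1, h4⟩ := h
  have hΔ' : 0 < 1 - Δ := by linarith
  refine ⟨fun w => (h01 w).1, hL, h1, fun w => ?_⟩
  have := h4 w
  rw [div_le_iff₀ hΔ'] at this
  rw [Mv]
  linarith


lemma i0_ne_i1 (hd : 2 ≤ d) : (⟨0, Nat.lt_of_lt_of_le Nat.zero_lt_two hd⟩ : Fin d) ≠ ⟨1, Nat.lt_of_lt_of_le Nat.one_lt_two hd⟩ := by
  simp [Fin.ext_iff]

lemma sum_Pv (hd : 2 ≤ d) : ∑ i, Pv d Δ i = 1 := by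
  classical
  have hP : Pv d Δ = fun i =>
      (if i = (⟨0, Nat.lt_of_lt_of_le Nat.zero_lt_two hd⟩ : Fin d) then 1 - Δ else 0) +
      (if i = (⟨1, Nat.lt_of_lt_of_le Nat.one_lt_two hd⟩ : Fin d) then Δ else 0) := by
    funext i
    rw [Pv]
    rcases eq_or_ne (i:ℕ) 0 with h0 | h0
    · have : i = (⟨0, Nat.lt_of_lt_of_le Nat.zero_lt_two hd⟩ : Fin d) := by simp [Fin.ext_iff, h0]
      simp [h0, this, (i0_ne_i1 hd)]
    · rcases eq_or_ne (i:ℕ) 1 with h1 | h1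
      · have e1 : i = (⟨1, Nat.lt_of_lt_of_le Nat.one_lt_two hd⟩ : Fin d) := by simp [Fin.ext_iff, h1]
        have e0 : i ≠ (⟨0, Nat.lt_of_lt_of_le Nat.zero_lt_two hd⟩ : Fin d) := by simp [Fin.ext_iff, h1]
        simp [h0, h1, e1, e0]
      · have e1 : i ≠ (⟨1, Nat.lt_of_lt_of_le Nat.one_lt_two hd⟩ : Fin d) := by simp [Fin.ext_iff, h1]
        have e0 : i ≠ (⟨0, Nat.lt_of_lt_of_le Nat.zero_lt_two hd⟩ : Fin d) := by simp [Fin.ext_iff, h0]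
        simp [h0, h1, e1, e0]
  rw [hP, Finset.sum_add_distrib, Finset.sum_ite_eq', Finset.sum_ite_eq']
  simp

lemma sum_Sv (hd : 2 ≤ d) : ∑ i, Sv d m Δ i = Lv m Δ := by
  classical
  have hS : Sv d m Δ = fun i => (if i = (⟨0, Nat.lt_of_lt_of_le Nat.zero_lt_two hd⟩ : Fin d) then Lv m Δ else 0) := by
    funext i
    rw [Sv]
    rcases eq_or_ne (i:ℕ) 0 with h0 | h0
    · have : i = (⟨0, Nat.lt_of_lt_of_le Nat.zero_lt_two hd⟩ : Fin d) := by simp [Fin.ext_iff, h0]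
      simp [h0, this]
    · have e0 : i ≠ (⟨0, Nat.lt_of_lt_of_le Nat.zero_lt_two hd⟩ : Fin d) := by simp [Fin.ext_iff, h0]
      simp [h0, e0]
  rw [hS, Finset.sum_ite_eq']
  simp

lemma Pv_mem (hd : 2 ≤ d) (hm : 2 ≤ m) (hΔ0 : 0 < Δ) (hΔ2 : Δ ≤ 1/2)
    (σ : Equiv.Perm (Fin d)) : (Pv d Δ ∘ σ) ∈ Kset d m Δ := by
  have hsum : ∑ i, (Pv d Δ ∘ σ) i = 1 := by
    rw [show ∑ i, (Pv d Δ ∘ σ) i = ∑ i, Pv d Δ (σ i) from rfl, Equiv.sum_comp σ (Pv d Δ),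
      sum_Pv hd]
  apply mem_K' hm hΔ2
  · intro w
    simp only [Function.comp_apply, Pv]
    split_ifs <;> linarith
  · rw [hsum]; exact L_le_one hm hΔ0 hΔ2
  · rw [hsum]
  · intro w
    rw [hsum, M_one hm]
    simp only [Function.comp_apply, Pv]
    split_ifs <;> linarith

lemma Sv_mem (hd : 2 ≤ d) (hm : 2 ≤ m) (hΔ0 : 0 < Δ) (hΔ2 : Δ ≤ 1/2)
    (σ : Equiv.Perm (Fin d)) : (Sv d m Δ ∘ σ) ∈ Kset d m Δ := by
  have hL := L_pos hm hΔ0 hΔ2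
  have hsum : ∑ i, (Sv d m Δ ∘ σ) i = Lv m Δ := by
    rw [show ∑ i, (Sv d m Δ ∘ σ) i = ∑ i, Sv d m Δ (σ i) from rfl,
      Equiv.sum_comp σ (Sv d m Δ), sum_Sv hd]
  apply mem_K' hm hΔ2
  · intro w
    simp only [Function.comp_apply, Sv]
    split_ifs <;> linarith
  · rw [hsum]
  · rw [hsum]; exact L_le_one hm hΔ0 hΔ2
  · intro w
    rw [hsum, M_L hm hΔ0]
    simp only [Function.comp_apply, Sv]
    split_ifs <;> linarith

/-- if we can move in direction `±v`, `x` is not extreme -/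
lemma not_extreme {x v : Fin d → ℝ} (hv : v ≠ 0)
    (h1 : x + v ∈ Kset d m Δ) (h2 : x - v ∈ Kset d m Δ) :
    x ∉ (Kset d m Δ).extremePoints ℝ := by
  intro hx
  have hseg : x ∈ openSegment ℝ (x + v) (x - v) := by
    refine ⟨1/2, 1/2, by norm_num, by norm_num, by norm_num, ?_⟩
    funext i
    simp only [Pi.add_apply, Pi.sub_apply, Pi.smul_apply, smul_eq_mul]
    ring
  rw [mem_extremePoints] at hx
  have := (hx.2 (x + v) h1 (x - v) h2 hseg).1
  apply hv
  have : v = (x + v) - x := by abel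
  rw [this, ‹x + v = x›]
  abel

lemma combo_le {a b u v c : ℝ} (ha : 0 < a) (hb : 0 < b) (hab : a + b = 1)
    (hu : u ≤ c) (hv : v ≤ c) (h : a * u + b * v = c) : u = c ∧ v = c := by
  have habc : a * c + b * c = c := by rw [← add_mul, hab, one_mul]
  constructor
  · by_contra hne
    have hlt : u < c := lt_of_le_of_ne hu hne
    nlinarith [mul_lt_mul_of_pos_left hlt ha, mul_le_mul_of_nonneg_left hv hb.le]
  · by_contra hne
    have hlt : v < c := lt_of_le_of_ne hv hne
    nlinarith [mul_lt_mul_of_pos_left hlt hb, mul_le_mul_of_nonneg_left hu ha.le]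

lemma combo_ge {a b u v c : ℝ} (ha : 0 < a) (hb : 0 < b) (hab : a + b = 1)
    (hu : c ≤ u) (hv : c ≤ v) (h : a * u + b * v = c) : u = c ∧ v = c := by
  have habc : a * c + b * c = c := by rw [← add_mul, hab, one_mul]
  constructor
  · by_contra hne
    have hlt : c < u := lt_of_le_of_ne hu (Ne.symm hne)
    nlinarith [mul_lt_mul_of_pos_left hlt ha, mul_le_mul_of_nonneg_left hv hb.le]
  · by_contra hne
    have hlt : c < v := lt_of_le_of_ne hv (Ne.symm hne)
    nlinarith [mul_lt_mul_of_pos_left hlt hb, mul_le_mul_of_nonneg_left hu ha.le]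

lemma sum_eq_coord {f g : Fin d → ℝ} (j : Fin d) (h : ∀ i, i ≠ j → f i = g i)
    (hs : ∑ i, f i = ∑ i, g i) : f j = g j := by
  classical
  have hf := Finset.sum_erase_add Finset.univ f (Finset.mem_univ j)
  have hg := Finset.sum_erase_add Finset.univ g (Finset.mem_univ j)
  have he : ∑ i ∈ Finset.univ.erase j, f i = ∑ i ∈ Finset.univ.erase j, g i :=
    Finset.sum_congr rfl fun i hi => h i (Finset.ne_of_mem_erase hi)
  linarith


lemma Pv_extreme (hd : 2 ≤ d) (hm : 2 ≤ m) (hΔ0 : 0 < Δ) (hΔ2 : Δ ≤ 1/2)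
    (σ : Equiv.Perm (Fin d)) : (Pv d Δ ∘ σ) ∈ (Kset d m Δ).extremePoints ℝ := by
  classical
  set x : Fin d → ℝ := Pv d Δ ∘ σ with hxdef
  have hxK := Pv_mem hd hm hΔ0 hΔ2 σ
  have hsumx : ∑ i, x i = 1 := by
    rw [hxdef, show ∑ i, (Pv d Δ ∘ σ) i = ∑ i, Pv d Δ (σ i) from rfl,
      Equiv.sum_comp σ (Pv d Δ), sum_Pv hd]
  rw [mem_extremePoints]
  refine ⟨hxK, ?_⟩
  intro y hy z hz hseg
  obtain ⟨a, b, ha, hb, hab, hcomb⟩ := hseg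
  have hcoord : ∀ i, a * y i + b * z i = x i := by
    intro i
    have := congrFun hcomb i
    simpa using this
  have hsum : a * ∑ i, y i + b * ∑ i, z i = 1 := by
    have h1 : ∑ i, (a * y i + b * z i) = ∑ i, x i := Finset.sum_congr rfl fun i _ => hcoord i
    rw [Finset.sum_add_distrib, ← Finset.mul_sum, ← Finset.mul_sum, hsumx] at h1
    exact h1
  have hsy := combo_le ha hb hab hy.2.2.1 hz.2.2.1 hsum
  set j := σ.symm ⟨1, Nat.lt_of_lt_of_le Nat.one_lt_two hd⟩ with hjdef
  have hoff : ∀ i, i ≠ j → y i = x i ∧ z i = x i := by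
    intro i hij
    have hσi : σ i ≠ (⟨1, Nat.lt_of_lt_of_le Nat.one_lt_two hd⟩ : Fin d) := by
      intro h
      exact hij (by rw [hjdef, ← h, Equiv.symm_apply_apply])
    have hσi' : (σ i : ℕ) ≠ 1 := fun h => hσi (by simp [Fin.ext_iff, h])
    rcases eq_or_ne ((σ i : ℕ)) 0 with h0 | h0
    · have hxi : x i = 1 - Δ := by
        rw [hxdef]; simp only [Function.comp_apply, Pv, h0, if_pos]
      rw [hxi]
      exact combo_le ha hb hab (hy.1 i).2 (hz.1 i).2 (by rw [hcoord i, hxi])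
    · have hxi : x i = 0 := by
        rw [hxdef]; simp only [Function.comp_apply, Pv, h0, hσi']
        simp
      rw [hxi]
      exact combo_ge ha hb hab (hy.1 i).1 (hz.1 i).1 (by rw [hcoord i, hxi])
  have hyj : y j = x j := by
    apply sum_eq_coord j (fun i hi => (hoff i hi).1)
    rw [hsy.1, hsumx]
  have hzj : z j = x j := by
    apply sum_eq_coord j (fun i hi => (hoff i hi).2)
    rw [hsy.2, hsumx]
  constructor
  · funext i
    rcases eq_or_ne i j with h | h
    · rw [h]; exact hyj
    · exact (hoff i h).1
  · funext i
    rcases eq_or_ne i j with h | h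
    · rw [h]; exact hzj
    · exact (hoff i h).2

lemma Sv_extreme (hd : 2 ≤ d) (hm : 2 ≤ m) (hΔ0 : 0 < Δ) (hΔ2 : Δ ≤ 1/2)
    (σ : Equiv.Perm (Fin d)) : (Sv d m Δ ∘ σ) ∈ (Kset d m Δ).extremePoints ℝ := by
  classical
  set x : Fin d → ℝ := Sv d m Δ ∘ σ with hxdef
  have hxK := Sv_mem hd hm hΔ0 hΔ2 σ
  have hsumx : ∑ i, x i = Lv m Δ := by
    rw [hxdef, show ∑ i, (Sv d m Δ ∘ σ) i = ∑ i, Sv d m Δ (σ i) from rfl,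
      Equiv.sum_comp σ (Sv d m Δ), sum_Sv hd]
  rw [mem_extremePoints]
  refine ⟨hxK, ?_⟩
  intro y hy z hz hseg
  obtain ⟨a, b, ha, hb, hab, hcomb⟩ := hseg
  have hcoord : ∀ i, a * y i + b * z i = x i := by
    intro i
    have := congrFun hcomb i
    simpa using this
  have hsum : a * ∑ i, y i + b * ∑ i, z i = Lv m Δ := by
    have h1 : ∑ i, (a * y i + b * z i) = ∑ i, x i := Finset.sum_congr rfl fun i _ => hcoord i
    rw [Finset.sum_add_distrib, ← Finset.mul_sum, ← Finset.mul_sum, hsumx] at h1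
    exact h1
  have hsy := combo_ge ha hb hab hy.2.1 hz.2.1 hsum
  set j := σ.symm ⟨0, Nat.lt_of_lt_of_le Nat.zero_lt_two hd⟩ with hjdef
  have hoff : ∀ i, i ≠ j → y i = x i ∧ z i = x i := by
    intro i hij
    have hσi : σ i ≠ (⟨0, Nat.lt_of_lt_of_le Nat.zero_lt_two hd⟩ : Fin d) := by
      intro h
      exact hij (by rw [hjdef, ← h, Equiv.symm_apply_apply])
    have hσi' : (σ i : ℕ) ≠ 0 := fun h => hσi (by simp [Fin.ext_iff, h])
    have hxi : x i = 0 := by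
      rw [hxdef]; simp only [Function.comp_apply, Sv, hσi']
      simp
    rw [hxi]
    exact combo_ge ha hb hab (hy.1 i).1 (hz.1 i).1 (by rw [hcoord i, hxi])
  have hyj : y j = x j := by
    apply sum_eq_coord j (fun i hi => (hoff i hi).1)
    rw [hsy.1, hsumx]
  have hzj : z j = x j := by
    apply sum_eq_coord j (fun i hi => (hoff i hi).2)
    rw [hsy.2, hsumx]
  constructor
  · funext i
    rcases eq_or_ne i j with h | h
    · rw [h]; exact hyj
    · exact (hoff i h).1
  · funext i
    rcases eq_or_ne i j with h | h
    · rw [h]; exact hzj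
    · exact (hoff i h).2

lemma exists_perm_P (hd : 2 ≤ d) {x : Fin d → ℝ} {i j : Fin d} (hij : j ≠ i)
    (hxj : x j = 1 - Δ) (hxi : x i = Δ)
    (h0 : ∀ w, w ≠ j → w ≠ i → x w = 0) :
    ∃ σ : Equiv.Perm (Fin d), x = Pv d Δ ∘ σ := by
  classical
  set i0 : Fin d := ⟨0, Nat.lt_of_lt_of_le Nat.zero_lt_two hd⟩
  set i1 : Fin d := ⟨1, Nat.lt_of_lt_of_le Nat.one_lt_two hd⟩
  have h01 : i0 ≠ i1 := by simp [i0, i1, Fin.ext_iff]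
  set τ : Equiv.Perm (Fin d) := Equiv.swap j i0 with hτ
  set σ : Equiv.Perm (Fin d) := τ.trans (Equiv.swap (τ i) i1) with hσ
  have hτj : τ j = i0 := Equiv.swap_apply_left j i0
  have hτine : τ i ≠ i0 := by
    rw [← hτj]
    exact fun h => hij.symm (τ.injective h)
  have hσj : σ j = i0 := by
    rw [hσ, Equiv.trans_apply, hτj]
    exact Equiv.swap_apply_of_ne_of_ne (Ne.symm hτine) h01
  have hσi : σ i = i1 := by
    rw [hσ, Equiv.trans_apply]
    exact Equiv.swap_apply_left (τ i) i1
  refine ⟨σ, funext fun w => ?_⟩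
  rcases eq_or_ne w j with h | hwj
  · subst h
    simp only [Function.comp_apply, hσj, Pv]
    rw [hxj]
    norm_num
  rcases eq_or_ne w i with h | hwi
  · subst h
    simp only [Function.comp_apply, hσi, Pv]
    rw [hxi]
    norm_num
  · have h1 : σ w ≠ i0 := by rw [← hσj]; exact fun h => hwj (σ.injective h)
    have h2 : σ w ≠ i1 := by rw [← hσi]; exact fun h => hwi (σ.injective h)
    have h1' : (σ w : ℕ) ≠ 0 := fun h => h1 (by simp [Fin.ext_iff, h, i0])
    have h2' : (σ w : ℕ) ≠ 1 := fun h => h2 (by simp [Fin.ext_iff, h, i1])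
    simp only [Function.comp_apply, Pv, h1', h2']
    rw [h0 w hwj hwi]
    simp

lemma exists_perm_S (hd : 2 ≤ d) {x : Fin d → ℝ} {j : Fin d}
    (hxj : x j = Lv m Δ) (h0 : ∀ w, w ≠ j → x w = 0) :
    ∃ σ : Equiv.Perm (Fin d), x = Sv d m Δ ∘ σ := by
  classical
  set i0 : Fin d := ⟨0, Nat.lt_of_lt_of_le Nat.zero_lt_two hd⟩
  set σ : Equiv.Perm (Fin d) := Equiv.swap j i0 with hσ
  have hσj : σ j = i0 := Equiv.swap_apply_left j i0
  refine ⟨σ, funext fun w => ?_⟩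
  rcases eq_or_ne w j with h | hwj
  · subst h
    simp only [Function.comp_apply, hσj, Sv]
    rw [hxj]
    norm_num
  · have h1 : σ w ≠ i0 := by rw [← hσj]; exact fun h => hwj (σ.injective h)
    have h1' : (σ w : ℕ) ≠ 0 := fun h => h1 (by simp [Fin.ext_iff, h, i0])
    simp only [Function.comp_apply, Sv, h1']
    rw [h0 w hwj]
    simp


lemma no_two_free (hm : 2 ≤ m) (hΔ0 : 0 < Δ) (hΔ2 : Δ ≤ 1/2) {x : Fin d → ℝ}
    (hx : x ∈ (Kset d m Δ).extremePoints ℝ) {i j : Fin d} (hij : i ≠ j)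
    (hi1 : 0 < x i) (hi2 : x i < Mv m Δ (∑ w, x w))
    (hj1 : 0 < x j) (hj2 : x j < Mv m Δ (∑ w, x w)) : False := by
  classical
  obtain ⟨h0, hL, h1, hM⟩ := mem_K_dest hm hΔ2 hx.1
  set Mx := Mv m Δ (∑ w, x w) with hMx
  set ε := min (min (x i) (Mx - x i)) (min (x j) (Mx - x j)) with hε
  have hεpos : 0 < ε := by
    apply lt_min (lt_min hi1 (by linarith)) (lt_min hj1 (by linarith))
  have hε1 : ε ≤ x i := le_trans (min_le_left _ _) (min_le_left _ _)
  have hε2 : ε ≤ Mx - x i := le_trans (min_le_left _ _) (min_le_right _ _)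
  have hε3 : ε ≤ x j := le_trans (min_le_right _ _) (min_le_left _ _)
  have hε4 : ε ≤ Mx - x j := le_trans (min_le_right _ _) (min_le_right _ _)
  set v : Fin d → ℝ := fun w => if w = i then ε else if w = j then -ε else 0 with hv
  have hvsplit : v = (fun w => if w = i then ε else 0) + (fun w => if w = j then -ε else 0) := by
    funext w
    simp only [hv, Pi.add_apply]
    rcases eq_or_ne w i with h | h
    · subst h; simp [hij]
    · simp [h]
  have hvsum : ∑ w, v w = 0 := by
    rw [hvsplit]
    simp only [Pi.add_apply]
    rw [Finset.sum_add_distrib, Finset.sum_ite_eq', Finset.sum_ite_eq']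
    simp
  have hsum_add : ∑ w, (x + v) w = ∑ w, x w := by
    simp only [Pi.add_apply]
    rw [Finset.sum_add_distrib, hvsum, add_zero]
  have hsum_sub : ∑ w, (x - v) w = ∑ w, x w := by
    simp only [Pi.sub_apply]
    rw [Finset.sum_sub_distrib, hvsum, sub_zero]
  have hvne : v ≠ 0 := by
    intro h
    have := congrFun h i
    simp only [hv, Pi.zero_apply, if_pos rfl] at this
    linarith
  have hmem1 : x + v ∈ Kset d m Δ := by
    apply mem_K' hm hΔ2
    · intro w
      simp only [Pi.add_apply, hv]
      split_ifs with h h'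
      · subst h; linarith
      · subst h'; linarith
      · linarith [h0 w]
    · rw [hsum_add]; exact hL
    · rw [hsum_add]; exact h1
    · intro w
      rw [hsum_add]
      simp only [Pi.add_apply, hv]
      split_ifs with h h'
      · subst h; rw [← hMx]; linarith
      · subst h'; rw [← hMx]; linarith [hM w]
      · rw [← hMx]; linarith [hM w]
  have hmem2 : x - v ∈ Kset d m Δ := by
    apply mem_K' hm hΔ2
    · intro w
      simp only [Pi.sub_apply, hv]
      split_ifs with h h'
      · subst h; linarith
      · subst h'; linarith
      · linarith [h0 w]
    · rw [hsum_sub]; exact hL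
    · rw [hsum_sub]; exact h1
    · intro w
      rw [hsum_sub]
      simp only [Pi.sub_apply, hv]
      split_ifs with h h'
      · subst h; rw [← hMx]; linarith
      · subst h'; rw [← hMx]; linarith [hM w]
      · rw [← hMx]; linarith [hM w]
  exact not_extreme hvne hmem1 hmem2 hx


lemma sum_twoval {x : Fin d → ℝ} {c : ℝ} {T : Finset (Fin d)}
    (hT : ∀ w, w ∈ T ↔ x w = c) (h : ∀ w, x w = 0 ∨ x w = c) :
    ∑ w, x w = (T.card : ℝ) * c := by
  classical
  have h1 : T = Finset.univ.filter (fun w => x w = c) := by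
    ext w; simp [hT w]
  rw [← Finset.sum_filter_add_sum_filter_not Finset.univ (fun w => x w = c) x]
  have e1 : ∑ w ∈ Finset.univ.filter (fun w => x w = c), x w
      = ∑ w ∈ Finset.univ.filter (fun w => x w = c), c :=
    Finset.sum_congr rfl fun w hw => (Finset.mem_filter.mp hw).2
  have e2 : ∑ w ∈ Finset.univ.filter (fun w => ¬ x w = c), x w = 0 :=
    Finset.sum_eq_zero fun w hw => (h w).resolve_right (Finset.mem_filter.mp hw).2
  rw [e1, e2, Finset.sum_const, nsmul_eq_mul, add_zero, h1]

lemma sum_twoval_free {x : Fin d → ℝ} {c : ℝ} {T : Finset (Fin d)} {i : Fin d}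
    (hT : ∀ w, w ∈ T ↔ x w = c) (hi : x i ≠ c)
    (h : ∀ w, w ≠ i → x w = 0 ∨ x w = c) :
    ∑ w, x w = (T.card : ℝ) * c + x i := by
  classical
  have h1 : T = Finset.univ.filter (fun w => x w = c) := by
    ext w; simp [hT w]
  rw [← Finset.sum_filter_add_sum_filter_not Finset.univ (fun w => x w = c) x]
  have e1 : ∑ w ∈ Finset.univ.filter (fun w => x w = c), x w
      = ∑ w ∈ Finset.univ.filter (fun w => x w = c), c :=
    Finset.sum_congr rfl fun w hw => (Finset.mem_filter.mp hw).2
  have e2 : ∑ w ∈ Finset.univ.filter (fun w => ¬ x w = c), x w = x i := by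
    apply Finset.sum_eq_single i
    · intro b hb hbi
      exact ((h b hbi).resolve_right (Finset.mem_filter.mp hb).2)
    · intro hnot
      exact absurd (Finset.mem_filter.mpr ⟨Finset.mem_univ i, hi⟩) hnot
  rw [e1, e2, Finset.sum_const, nsmul_eq_mul, h1]


set_option maxHeartbeats 1000000 in
/-- In the interior case `L < Σ < 1`, a free coordinate plus coordinates at the cap
leads to a contradiction with extremality. -/
lemma interior_free_contra (hm : 2 ≤ m) (hΔ0 : 0 < Δ) (hΔ2 : Δ ≤ 1/2) {x : Fin d → ℝ}
    (hx : x ∈ (Kset d m Δ).extremePoints ℝ) {i : Fin d} {T : Finset (Fin d)}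
    (hT : ∀ w, w ∈ T ↔ x w = Mv m Δ (∑ w, x w))
    (hi1 : 0 < x i) (hi2 : x i < Mv m Δ (∑ w, x w))
    (hother : ∀ w, w ≠ i → x w = 0 ∨ x w = Mv m Δ (∑ w, x w))
    (hgtL : Lv m Δ < ∑ w, x w) (hlt1 : ∑ w, x w < 1) : False := by
  classical
  obtain ⟨h0, hL, h1, hM⟩ := mem_K_dest hm hΔ2 hx.1
  have hm0 : (0:ℝ) < m := hmpos hm
  have h1Δ : (0:ℝ) < 1 - Δ := by linarith
  set sx := ∑ w, x w with hsx
  set Mx := Mv m Δ sx with hMxd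
  have hMeq := M_eq (Δ := Δ) hm sx
  have hMxpos : 0 < Mx := M_pos hm hΔ2 (by linarith [L_pos hm hΔ0 hΔ2])
  have hMxle : Mx ≤ 1 - Δ := M_le hm hΔ2 (le_of_lt hlt1)
  set k := T.card with hk
  have hsumfree : sx = (k:ℝ) * Mx + x i := sum_twoval_free hT (ne_of_lt hi2) hother
  set s : ℝ := (m:ℝ) - (k:ℝ) * (1 - Δ) with hs
  have hMs : Mx * s = (1 - Δ) * ((m:ℝ) - 1 + x i) := by
    rw [hs]
    linear_combination hMeq + (1 - Δ) * hsumfree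
  have hspos : 0 < s := by
    by_contra hcon
    push_neg at hcon
    have h2 : Mx * s ≤ 0 := mul_nonpos_iff.mpr (Or.inl ⟨hMxpos.le, hcon⟩)
    have h3 : 0 < (1-Δ) * ((m:ℝ) - 1 + x i) := mul_pos h1Δ (by linarith [hm1 hm])
    linarith [hMs]
  have hs1 : 1 - Δ ≤ s := by
    have hmm : Mx ≤ (m:ℝ) - 1 + x i := by nlinarith [hm1 hm]
    nlinarith
  set ε := min (min ((1 - sx)/m) ((sx - Lv m Δ)/m))
    (min (min ((Mx - x i)/s) (x i/s)) (Mx/(1-Δ))) with hε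
  have hεpos : 0 < ε := by
    apply lt_min (lt_min (div_pos (by linarith) hm0) (div_pos (by linarith) hm0))
    exact lt_min (lt_min (div_pos (by linarith) hspos) (div_pos hi1 hspos))
      (div_pos hMxpos h1Δ)
  have hεm1 : ε * m ≤ 1 - sx :=
    (le_div_iff₀ hm0).mp (le_trans (min_le_left _ _) (min_le_left _ _))
  have hεm2 : ε * m ≤ sx - Lv m Δ :=
    (le_div_iff₀ hm0).mp (le_trans (min_le_left _ _) (min_le_right _ _))
  have hεs1 : ε * s ≤ Mx - x i :=
    (le_div_iff₀ hspos).mp (le_trans (min_le_right _ _)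
      (le_trans (min_le_left _ _) (min_le_left _ _)))
  have hεs2 : ε * s ≤ x i :=
    (le_div_iff₀ hspos).mp (le_trans (min_le_right _ _)
      (le_trans (min_le_left _ _) (min_le_right _ _)))
  have hεΔ : ε * (1-Δ) ≤ Mx :=
    (le_div_iff₀ h1Δ).mp (le_trans (min_le_right _ _) (min_le_right _ _))
  set v : Fin d → ℝ := fun w => if w = i then ε * s else if x w = Mx then ε * (1-Δ) else 0
    with hv
  have hvsplit : v = (fun w => if w = i then ε * s else 0)
      + (fun w => if x w = Mx then ε * (1-Δ) else 0) := by
    funext w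
    simp only [hv, Pi.add_apply]
    rcases eq_or_ne w i with h | h
    · subst h
      simp [ne_of_lt hi2]
    · simp [h]
  have hTfilter : T = Finset.univ.filter (fun w => x w = Mx) := by
    ext w; simp [hT w]
  have hvsum : ∑ w, v w = ε * m := by
    rw [hvsplit]
    simp only [Pi.add_apply]
    rw [Finset.sum_add_distrib, Finset.sum_ite_eq']
    have : ∑ w, (if x w = Mx then ε * (1-Δ) else 0)
        = ∑ w ∈ Finset.univ.filter (fun w => x w = Mx), ε * (1-Δ) :=
      (Finset.sum_filter _ _).symm
    rw [this, Finset.sum_const, ← hTfilter, ← hk, nsmul_eq_mul]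
    simp only [Finset.mem_univ, if_pos]
    rw [hs]
    ring
  have hsum_add : ∑ w, (x + v) w = sx + ε * m := by
    simp only [Pi.add_apply]
    rw [Finset.sum_add_distrib, hvsum, hsx]
  have hsum_sub : ∑ w, (x - v) w = sx - ε * m := by
    simp only [Pi.sub_apply]
    rw [Finset.sum_sub_distrib, hvsum, hsx]
  have hMadd : Mv m Δ (sx + ε * m) = Mx + ε * (1-Δ) := by
    rw [M_shift hm, ← hMxd]
    congr 1
    field_simp
  have hMsub : Mv m Δ (sx - ε * m) = Mx - ε * (1-Δ) := by
    rw [sub_eq_add_neg, M_shift hm, ← hMxd]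
    have : (1 - Δ) * -(ε * ↑m) / ↑m = -(ε * (1-Δ)) := by
      field_simp
    rw [this]
    ring
  have hεspos : 0 < ε * s := mul_pos hεpos hspos
  have hεmpos : 0 < ε * (m:ℝ) := mul_pos hεpos hm0
  have hεΔpos : 0 < ε * (1-Δ) := mul_pos hεpos h1Δ
  have hεmono : ε * (1-Δ) ≤ ε * s := mul_le_mul_of_nonneg_left hs1 hεpos.le
  have hvne : v ≠ 0 := by
    intro h
    have := congrFun h i
    simp only [hv, Pi.zero_apply, if_pos rfl] at this
    exact absurd this (ne_of_gt hεspos)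
  have hmem1 : x + v ∈ Kset d m Δ := by
    apply mem_K' hm hΔ2
    · intro w
      simp only [Pi.add_apply, hv]
      split_ifs with h h'
      · subst h; linarith
      · linarith [h0 w]
      · linarith [h0 w]
    · rw [hsum_add]; linarith
    · rw [hsum_add]; linarith
    · intro w
      rw [hsum_add, hMadd]
      simp only [Pi.add_apply, hv]
      split_ifs with h h'
      · subst h; linarith
      · rw [h']
      · linarith [hM w]
  have hmem2 : x - v ∈ Kset d m Δ := by
    apply mem_K' hm hΔ2
    · intro w
      simp only [Pi.sub_apply, hv]
      split_ifs with h h'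
      · subst h; linarith
      · linarith [hεΔ, h'.ge]
      · linarith [h0 w]
    · rw [hsum_sub]; linarith
    · rw [hsum_sub]; linarith
    · intro w
      rw [hsum_sub, hMsub]
      simp only [Pi.sub_apply, hv]
      split_ifs with h h'
      · subst h; linarith [hi2.le]
      · rw [h']
      · rcases eq_or_ne w i with hwi | hwi
        · exact absurd rfl (hwi ▸ h)
        · have := (hother w hwi).resolve_right h'
          rw [this]
          linarith
  exact not_extreme hvne hmem1 hmem2 hx


set_option maxHeartbeats 1000000 in
lemma extreme_classify (hd : 2 ≤ d) (hm : 2 ≤ m) (hΔ0 : 0 < Δ) (hΔ2 : Δ ≤ 1/2)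
    {x : Fin d → ℝ} (hx : x ∈ (Kset d m Δ).extremePoints ℝ) :
    (∃ σ : Equiv.Perm (Fin d), x = Pv d Δ ∘ σ) ∨
      (∃ σ : Equiv.Perm (Fin d), x = Sv d m Δ ∘ σ) := by
  classical
  obtain ⟨h0, hL, h1, hM⟩ := mem_K_dest hm hΔ2 hx.1
  have hm0 := hmpos hm
  have hm1' := hm1 hm
  have h1Δ : (0:ℝ) < 1 - Δ := by linarith
  have hLpos := L_pos hm hΔ0 hΔ2
  set sx := ∑ w, x w with hsx
  set Mx := Mv m Δ sx with hMxd
  have hMxpos : 0 < Mx := M_pos hm hΔ2 (by linarith)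
  have hMeq := M_eq (Δ := Δ) hm sx
  set T := Finset.univ.filter (fun w => x w = Mx) with hTd
  have hT : ∀ w, w ∈ T ↔ x w = Mx := fun w => by simp [hTd]
  set k := T.card with hk
  by_cases hfree : ∃ i, 0 < x i ∧ x i < Mx
  · obtain ⟨i, hi1, hi2⟩ := hfree
    have hother : ∀ w, w ≠ i → x w = 0 ∨ x w = Mx := by
      intro w hw
      by_contra hcon
      push_neg at hcon
      exact no_two_free hm hΔ0 hΔ2 hx hw
        (lt_of_le_of_ne (h0 w) (Ne.symm hcon.1)) (lt_of_le_of_ne (hM w) hcon.2) hi1 hi2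
    have hsumfree : sx = (k:ℝ) * Mx + x i := sum_twoval_free hT (ne_of_lt hi2) hother
    by_cases hc1 : sx = 1
    · -- top face : permutation of P*
      have hMx1 : Mx = 1 - Δ := by rw [hMxd, hc1]; exact M_one hm
      have hkr : (k:ℝ) * Mx + x i = 1 := by rw [← hsumfree]; exact hc1
      have hk1 : k = 1 := by
        have hk0 : k ≠ 0 := by
          intro h
          rw [h] at hkr
          push_cast at hkr
          rw [hMx1] at hi2
          linarith
        have hklt : k < 2 := by
          by_contra hcon
          push_neg at hcon
          have h2k : (2:ℝ) ≤ (k:ℝ) := by exact_mod_cast hcon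
          rw [hMx1] at hkr
          nlinarith
        omega
      obtain ⟨j, hTj⟩ := Finset.card_eq_one.mp hk1
      have hjT : j ∈ T := by rw [hTj]; exact Finset.mem_singleton_self j
      have hxj' : x j = Mx := (hT j).mp hjT
      have hji : j ≠ i := by
        intro h
        rw [h] at hxj'
        linarith
      have hxj : x j = 1 - Δ := by rw [hxj', hMx1]
      have hxi : x i = Δ := by
        rw [hk1] at hkr
        push_cast at hkr
        rw [hMx1] at hkr
        linarith
      have hz : ∀ w, w ≠ j → w ≠ i → x w = 0 := by
        intro w hwj hwi
        rcases hother w hwi with h | h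
        · exact h
        · exact absurd (by rw [hTj] at hT; exact Finset.mem_singleton.mp ((hT w).mpr h)) hwj
      exact Or.inl (exists_perm_P hd hji hxj hxi hz)
    · by_cases hcL : sx = Lv m Δ
      · exfalso
        have hMxL : Mx = Lv m Δ := by rw [hMxd, hcL]; exact M_L hm hΔ0
        rw [hMxL] at hsumfree hi2
        rw [hcL] at hsumfree
        rcases Nat.eq_zero_or_pos k with h | h
        · rw [h] at hsumfree
          push_cast at hsumfree
          linarith
        · have h1k : (1:ℝ) ≤ (k:ℝ) := by exact_mod_cast h
          nlinarith
      · have hgtL : Lv m Δ < sx := lt_of_le_of_ne hL (Ne.symm hcL)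
        have hlt1 : sx < 1 := lt_of_le_of_ne h1 hc1
        exact (interior_free_contra hm hΔ0 hΔ2 hx hT hi1 hi2 hother hgtL hlt1).elim
  · -- no free coordinate
    push_neg at hfree
    have hall : ∀ w, x w = 0 ∨ x w = Mx := by
      intro w
      rcases eq_or_lt_of_le (h0 w) with h | h
      · exact Or.inl h.symm
      · exact Or.inr (le_antisymm (hM w) (hfree w h))
    have hsum2 : sx = (k:ℝ) * Mx := sum_twoval hT hall
    have hk0 : k ≠ 0 := by
      intro h
      rw [h] at hsum2
      push_cast at hsum2
      linarith
    have hMeq2 : Mx * ((m:ℝ) - (k:ℝ) * (1-Δ)) = (1-Δ) * ((m:ℝ) - 1) := by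
      linear_combination hMeq + (1-Δ) * hsum2
    rcases eq_or_lt_of_le (Nat.one_le_iff_ne_zero.mpr hk0) with hk1 | hk2
    · -- k = 1 : permutation of S*
      have hk1' : k = 1 := hk1.symm
      have hMxL : Mx = Lv m Δ := by
        have hL2 := L_eq (m := m) (Δ := Δ) hm hΔ0
        have hcan : Mx * ((m:ℝ) - 1 + Δ) = Lv m Δ * ((m:ℝ) - 1 + Δ) := by
          rw [hk1'] at hMeq2
          push_cast at hMeq2
          rw [hL2]
          linarith [hMeq2]
        exact mul_right_cancel₀ (by positivity) hcan
      obtain ⟨j, hTj⟩ := Finset.card_eq_one.mp hk1'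
      have hxj : x j = Lv m Δ := by
        rw [← hMxL]
        exact (hT j).mp (by rw [hTj]; exact Finset.mem_singleton_self j)
      have hz : ∀ w, w ≠ j → x w = 0 := by
        intro w hw
        rcases hall w with h | h
        · exact h
        · exact absurd (by rw [hTj] at hT; exact Finset.mem_singleton.mp ((hT w).mpr h)) hw
      exact Or.inr (exists_perm_S hd hxj hz)
    · -- k ≥ 2 : forces Δ = 1/2, k = 2, a permutation of P*
      have hck : (2:ℝ) ≤ (k:ℝ) := by exact_mod_cast hk2
      have hmk : 0 < (m:ℝ) - (k:ℝ) * (1-Δ) := by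
        by_contra hcon
        push_neg at hcon
        have hnp : Mx * ((m:ℝ) - (k:ℝ) * (1-Δ)) ≤ 0 :=
          mul_nonpos_iff.mpr (Or.inl ⟨hMxpos.le, hcon⟩)
        nlinarith
      have hMxle : Mx ≤ 1 - Δ := M_le hm hΔ2 h1
      have hr1 : (k:ℝ) * (1-Δ) ≤ 1 := by nlinarith
      have hr2 : 1 ≤ (k:ℝ) * (1-Δ) := by nlinarith
      have hreq : (k:ℝ) * (1-Δ) = 1 := le_antisymm hr1 hr2
      have hΔhalf : Δ = 1/2 := by
        have hh : (1:ℝ) - Δ ≤ 1/2 := by nlinarith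
        linarith
      have hk2' : T.card = 2 := by
        have hkk : (k:ℝ) = 2 := by rw [hΔhalf] at hreq; linarith
        have : k = 2 := by exact_mod_cast hkk
        rw [← hk]; exact this
      have hMx12 : Mx = 1 - Δ := by
        have hcan : Mx * ((m:ℝ) - 1) = (1-Δ) * ((m:ℝ) - 1) := by
          rw [hreq] at hMeq2
          linarith [hMeq2]
        exact mul_right_cancel₀ (by linarith) hcan
      obtain ⟨j, j', hjj', hTjj⟩ := Finset.card_eq_two.mp hk2'
      have hxj : x j = 1 - Δ := by
        rw [← hMx12]
        exact (hT j).mp (by rw [hTjj]; exact Finset.mem_insert_self j {j'})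
      have hxj'' : x j' = Mx :=
        (hT j').mp (by rw [hTjj]; exact Finset.mem_insert_of_mem (Finset.mem_singleton_self j'))
      have hxj' : x j' = Δ := by
        rw [hxj'', hMx12, hΔhalf]; norm_num
      have hz : ∀ w, w ≠ j → w ≠ j' → x w = 0 := by
        intro w hwj hwj'
        rcases hall w with h | h
        · exact h
        · have hwT : w ∈ T := (hT w).mpr h
          rw [hTjj] at hwT
          rcases Finset.mem_insert.mp hwT with h' | h'
          · exact absurd h' hwj
          · exact absurd (Finset.mem_singleton.mp h') hwj'
      exact Or.inl (exists_perm_P hd hjj' hxj hxj' hz)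


lemma K_convex (hm : 2 ≤ m) (hΔ2 : Δ ≤ 1/2) : Convex ℝ (Kset d m Δ) := by
  intro y hy z hz a b ha hb hab
  obtain ⟨hy0, hyL, hy1, hyM⟩ := mem_K_dest hm hΔ2 hy
  obtain ⟨hz0, hzL, hz1, hzM⟩ := mem_K_dest hm hΔ2 hz
  have hm0 := (hmpos hm).ne'
  have hsum : ∑ w, (a • y + b • z) w = a * ∑ w, y w + b * ∑ w, z w := by
    simp only [Pi.add_apply, Pi.smul_apply, smul_eq_mul]
    rw [Finset.sum_add_distrib, ← Finset.mul_sum, ← Finset.mul_sum]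
  apply mem_K' hm hΔ2
  · intro w
    simp only [Pi.add_apply, Pi.smul_apply, smul_eq_mul]
    exact add_nonneg (mul_nonneg ha (hy0 w)) (mul_nonneg hb (hz0 w))
  · rw [hsum]
    have e1 : a * Lv m Δ + b * Lv m Δ = Lv m Δ := by rw [← add_mul, hab, one_mul]
    have e2 := mul_le_mul_of_nonneg_left hyL ha
    have e3 := mul_le_mul_of_nonneg_left hzL hb
    linarith
  · rw [hsum]
    have e1 : a * 1 + b * 1 = 1 := by rw [← add_mul, hab, one_mul]
    have e2 := mul_le_mul_of_nonneg_left hy1 ha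
    have e3 := mul_le_mul_of_nonneg_left hz1 hb
    linarith
  · intro w
    rw [hsum]
    have key : Mv m Δ (a * ∑ w, y w + b * ∑ w, z w)
        = a * Mv m Δ (∑ w, y w) + b * Mv m Δ (∑ w, z w) := by
      have hb' : b = 1 - a := by linarith
      subst hb'
      rw [Mv, Mv, Mv]
      field_simp
      ring
    rw [key]
    simp only [Pi.add_apply, Pi.smul_apply, smul_eq_mul]
    have e2 := mul_le_mul_of_nonneg_left (hyM w) ha
    have e3 := mul_le_mul_of_nonneg_left (hzM w) hb
    linarith

lemma K_closed : IsClosed (Kset d m Δ) := by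
  have hcs : Continuous fun S : Fin d → ℝ => ∑ w, S w :=
    continuous_finset_sum _ (fun i _ => continuous_apply i)
  have hrep : Kset d m Δ =
      (⋂ w, {S : Fin d → ℝ | 0 ≤ S w ∧ S w ≤ 1 - Δ}) ∩
      ({S : Fin d → ℝ | Lv m Δ ≤ ∑ w, S w} ∩
        ({S : Fin d → ℝ | ∑ w, S w ≤ 1} ∩
          ⋂ w, {S : Fin d → ℝ | S w / (1 - Δ) ≤ 1 - (1 - ∑ w', S w') / (m:ℝ)})) := by
    ext S
    simp only [Kset, Set.mem_setOf_eq, Set.mem_inter_iff, Set.mem_iInter]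
  rw [hrep]
  refine IsClosed.inter (isClosed_iInter fun w => ?_) (IsClosed.inter ?_ (IsClosed.inter ?_ (isClosed_iInter fun w => ?_)))
  · exact IsClosed.inter (isClosed_le continuous_const (continuous_apply w))
      (isClosed_le (continuous_apply w) continuous_const)
  · exact isClosed_le continuous_const hcs
  · exact isClosed_le hcs continuous_const
  · exact isClosed_le ((continuous_apply w).div_const _)
      (continuous_const.sub ((continuous_const.sub hcs).div_const _))

lemma K_compact (hΔ2 : Δ ≤ 1/2) : IsCompact (Kset d m Δ) := by
  apply IsCompact.of_isClosed_subset
    (isCompact_univ_pi (fun _ : Fin d => isCompact_Icc (a := (0:ℝ)) (b := 1 - Δ)))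
    K_closed
  intro S hS
  rw [Set.mem_univ_pi]
  intro i
  exact ⟨(hS.1 i).1, (hS.1 i).2⟩

theorem main (hd : 2 ≤ d) (hm : 2 ≤ m) (hΔ0 : 0 < Δ) (hΔ2 : Δ ≤ 1/2) :
    Kset d m Δ = convexHull ℝ
      {v | ∃ σ : Equiv.Perm (Fin d), v = Pv d Δ ∘ σ ∨ v = Sv d m Δ ∘ σ} ∧
    (Kset d m Δ).extremePoints ℝ =
      {v | ∃ σ : Equiv.Perm (Fin d), v = Pv d Δ ∘ σ ∨ v = Sv d m Δ ∘ σ} := by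
  set E : Set (Fin d → ℝ) :=
    {v | ∃ σ : Equiv.Perm (Fin d), v = Pv d Δ ∘ σ ∨ v = Sv d m Δ ∘ σ} with hE
  have hEext : E ⊆ (Kset d m Δ).extremePoints ℝ := by
    rintro v ⟨σ, h | h⟩
    · rw [h]; exact Pv_extreme hd hm hΔ0 hΔ2 σ
    · rw [h]; exact Sv_extreme hd hm hΔ0 hΔ2 σ
  have hextE : (Kset d m Δ).extremePoints ℝ ⊆ E := by
    intro x hx
    rcases extreme_classify hd hm hΔ0 hΔ2 hx with ⟨σ, h⟩ | ⟨σ, h⟩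
    · exact ⟨σ, Or.inl h⟩
    · exact ⟨σ, Or.inr h⟩
  have hEK : E ⊆ Kset d m Δ := subset_trans hEext (extremePoints_subset)
  have hEfin : E.Finite := by
    have hsub : E ⊆ (Set.range fun σ : Equiv.Perm (Fin d) => Pv d Δ ∘ σ) ∪
        (Set.range fun σ : Equiv.Perm (Fin d) => Sv d m Δ ∘ σ) := by
      rintro v ⟨σ, h | h⟩
      · exact Or.inl ⟨σ, h.symm⟩
      · exact Or.inr ⟨σ, h.symm⟩
    exact ((Set.finite_range _).union (Set.finite_range _)).subset hsub
  have hconvK : convexHull ℝ E ⊆ Kset d m Δ := convexHull_min hEK (K_convex hm hΔ2)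
  have hKconv : Kset d m Δ ⊆ convexHull ℝ E := by
    have hKM := closure_convexHull_extremePoints (K_compact (d := d) (m := m) (Δ := Δ) hΔ2) (K_convex (d := d) hm hΔ2)
    calc Kset d m Δ = closure (convexHull ℝ ((Kset d m Δ).extremePoints ℝ)) := hKM.symm
      _ ⊆ closure (convexHull ℝ E) := closure_mono (convexHull_mono hextE)
      _ = convexHull ℝ E := (hEfin.isClosed_convexHull (𝕜 := ℝ)).closure_eq
  exact ⟨Set.Subset.antisymm hKconv hconvK, Set.Subset.antisymm hextE hEext⟩

end Basic
end Stmt12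


open Set

/-- For `m ≥ 2`, `Δ ∈ (0, 1/2]`, define
`K_Δ = {S ∈ ℝ^d : 0 ≤ S_w ≤ 1-Δ ∀w, (1-Δ)/(1+Δ/(m-1)) ≤ Σ_w S_w ≤ 1,
       max_w S_w/(1-Δ) ≤ 1 - (1 - Σ_w S_w)/m}`.
Then `K_Δ` is a convex polytope whose extreme points are exactly the coordinate
permutations of `P* = (1-Δ, Δ, 0, …, 0)` and `S* = ((1-Δ)/(1+Δ/(m-1)), 0, …, 0)`;
equivalently `K_Δ = conv(E)` and `extremePoints K_Δ = E`. -/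
theorem stmt12 (d m : ℕ) (hd : 2 ≤ d) (hm : 2 ≤ m)
    (Δ : ℝ) (hΔ : Δ ∈ Ioc (0:ℝ) (1 / 2)) :
    let K : Set (Fin d → ℝ) :=
      {S | (∀ w, 0 ≤ S w ∧ S w ≤ 1 - Δ) ∧
        (1 - Δ) / (1 + Δ / ((m : ℝ) - 1)) ≤ ∑ w, S w ∧ (∑ w, S w) ≤ 1 ∧
        (∀ w, S w / (1 - Δ) ≤ 1 - (1 - ∑ w', S w') / (m : ℝ))}
    let Pstar : Fin d → ℝ :=
      fun i => if i = ⟨0, by omega⟩ then 1 - Δ else if i = ⟨1, by omega⟩ then Δ else 0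
    let Sstar : Fin d → ℝ :=
      fun i => if i = ⟨0, by omega⟩ then (1 - Δ) / (1 + Δ / ((m : ℝ) - 1)) else 0
    let E : Set (Fin d → ℝ) :=
      {v | ∃ σ : Equiv.Perm (Fin d), v = Pstar ∘ σ ∨ v = Sstar ∘ σ}
    K = convexHull ℝ E ∧ K.extremePoints ℝ = E := by
  intro K Pstar Sstar E
  obtain ⟨hΔ0, hΔ2⟩ := hΔ
  have hK : K = Stmt12.Kset d m Δ := rfl
  have hP : Pstar = Stmt12.Pv d Δ := by
    funext i
    show (if i = (⟨0, by omega⟩ : Fin d) then 1 - Δ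
        else if i = (⟨1, by omega⟩ : Fin d) then Δ else 0) = Stmt12.Pv d Δ i
    simp only [Stmt12.Pv, Fin.ext_iff]
  have hS : Sstar = Stmt12.Sv d m Δ := by
    funext i
    show (if i = (⟨0, by omega⟩ : Fin d) then (1 - Δ) / (1 + Δ / ((m : ℝ) - 1)) else 0)
      = Stmt12.Sv d m Δ i
    simp only [Stmt12.Sv, Stmt12.Lv, Fin.ext_iff]
  have hE : E = {v | ∃ σ : Equiv.Perm (Fin d),
      v = Stmt12.Pv d Δ ∘ σ ∨ v = Stmt12.Sv d m Δ ∘ σ} := by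
    rw [show E = {v | ∃ σ : Equiv.Perm (Fin d), v = Pstar ∘ σ ∨ v = Sstar ∘ σ} from rfl,
      hP, hS]
  rw [hK, hE]
  exact Stmt12.main hd hm hΔ0 hΔ2
end
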